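/- arXiv:2401.14298 — 5 statements merged into one kernel-verified Lean document; each statement's English description precedes it below -/
import Mathlib

section
/- Let p > 2 be a prime, let u be a unit of ℤ_p (‖u‖_p = 1) that is not a square in ℚ_p, and set v = -1 if p ≡ 3 (mod 4) and v = -u if p ≡ 1 (mod 4). Then the three binary quadratic forms over ℚ_p given by Q_{-v}(x) = x₁² - v·x₂², Q_p(x) = x₁² + p·x₂², Q_{up}(x) = u·x₁² + p·x₂² are anisotropic, every anisotropic quadratic form Q on ℚ_p² is linearly equivalent to t·Q_κ for some t ∈ ℚ_p^× and some κ ∈ {-v, p, up}, and no two of the three forms Q_{-v}, Q_p, Q_{up} are linearly equivalent up to a scaling by an element of ℚ_p^×. -/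
open scoped Matrix

open QuadraticMap Polynomial

namespace Stmt0Aux

variable {p : ℕ} [Fact p.Prime]

lemma mem_max_iff {z : ℤ_[p]} : z ∈ IsLocalRing.maximalIdeal ℤ_[p] ↔ ‖z‖ < 1 := by
  rw [IsLocalRing.mem_maximalIdeal, PadicInt.mem_nonunits]

lemma toZMod_ne_zero {w : ℤ_[p]} (hw : ‖w‖ = 1) : PadicInt.toZMod w ≠ 0 := by
  intro h
  have : w ∈ RingHom.ker (PadicInt.toZMod (p := p)) := h
  rw [PadicInt.ker_toZMod, mem_max_iff, hw] at this
  exact lt_irrefl 1 this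

lemma padic_sq_iff (hp2 : 2 < p) (w : ℤ_[p]) (hw : ‖w‖ = 1) :
    (∃ y : ℚ_[p], y ^ 2 = w) ↔ IsSquare (PadicInt.toZMod w) := by
  constructor
  · rintro ⟨y, hy⟩
    have hy1 : ‖y‖ ≤ 1 := by
      have h2 : ‖y‖ ^ 2 = 1 := by
        rw [← norm_pow, hy, PadicInt.padic_norm_e_of_padicInt, hw]
      nlinarith [norm_nonneg y]
    set z : ℤ_[p] := ⟨y, hy1⟩ with hzdef
    have hz : z ^ 2 = w := Subtype.ext (by push_cast [hzdef]; exact hy)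
    exact ⟨PadicInt.toZMod z, by rw [← hz, map_pow, pow_two]⟩
  · rintro ⟨r, hr⟩
    have hw0 : PadicInt.toZMod w ≠ 0 := toZMod_ne_zero hw
    have hr0 : r ≠ 0 := by rintro rfl; exact hw0 (by simp [hr])
    set a : ℤ_[p] := (ZMod.val r : ℤ_[p]) with hadef
    have ha : PadicInt.toZMod a = r := by
      rw [hadef, map_natCast, ZMod.natCast_val, ZMod.cast_id]
    have ha1 : ‖a‖ = 1 := by
      rcases lt_or_eq_of_le (PadicInt.norm_le_one a) with h | h
      · exfalso
        have : a ∈ RingHom.ker (PadicInt.toZMod (p := p)) := by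
          rw [PadicInt.ker_toZMod, mem_max_iff]; exact h
        exact hr0 (ha ▸ this)
      · exact h
    have h2 : ‖(2 : ℤ_[p])‖ = 1 := by
      rcases lt_or_eq_of_le (PadicInt.norm_le_one (2 : ℤ_[p])) with h | h
      · exfalso
        have := PadicInt.norm_int_lt_one_iff_dvd (p := p) 2
        rw [show ((2:ℤ) : ℤ_[p]) = 2 by push_cast; ring] at this
        have hd : (p:ℤ) ∣ 2 := this.mp h
        have := Int.le_of_dvd (by norm_num) hd
        omega
      · exact h
    set F : Polynomial ℤ_[p] := X ^ 2 - C w with hF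
    have hevala : F.eval a = a ^ 2 - w := by simp [hF]
    have hderiv : F.derivative.eval a = 2 * a := by
      simp [hF, derivative_sub, derivative_X_pow]
      norm_num
    have hnorm : ‖F.eval a‖ < ‖F.derivative.eval a‖ ^ 2 := by
      rw [hevala, hderiv, norm_mul, h2, ha1]
      have : a ^ 2 - w ∈ RingHom.ker (PadicInt.toZMod (p := p)) := by
        simp [RingHom.mem_ker, map_pow, ha, hr, pow_two]
      rw [PadicInt.ker_toZMod, mem_max_iff] at this
      simpa using this
    obtain ⟨z, hz, -⟩ := hensels_lemma hnorm
    rw [hF] at hz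
    replace hz : z ^ 2 = w := by simpa [sub_eq_zero] using hz
    exact ⟨(z : ℚ_[p]), by exact_mod_cast congrArg (PadicInt.Coe.ringHom) hz⟩

lemma ppos : (1:ℝ) < (p:ℝ) := by exact_mod_cast (Fact.out : p.Prime).one_lt

lemma sq_norm_ne (y : ℚ_[p]) (hy : y ≠ 0) (k : ℤ) : ‖y‖ ^ 2 ≠ (p:ℝ) ^ (2 * k + 1) := by
  intro h
  have hpR : (0:ℝ) < p := lt_trans zero_lt_one ppos
  rw [Padic.norm_eq_zpow_neg_valuation hy, ← zpow_natCast, ← zpow_mul] at h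
  have := zpow_right_injective₀ hpR (ne_of_gt ppos) h
  omega

lemma no_sq_eq_unit_mul_p (c y : ℚ_[p]) (hc : ‖c‖ = 1) : y ^ 2 ≠ c * p := by
  intro h
  have hpR : (0:ℝ) < p := lt_trans zero_lt_one ppos
  have hy : y ≠ 0 := by
    rintro rfl
    have : ‖c * (p:ℚ_[p])‖ = 0 := by rw [← h]; simp
    rw [norm_mul, hc, one_mul, Padic.norm_p] at this
    rw [inv_eq_zero] at this
    exact ne_of_gt hpR this
  apply sq_norm_ne y hy (-1)
  rw [← norm_pow, h, norm_mul, hc, one_mul, Padic.norm_p]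
  norm_num

lemma no_unit_eq_sq_mul_p (c y : ℚ_[p]) (hc : ‖c‖ = 1) (hy : y ≠ 0) : c ≠ y ^ 2 * p := by
  intro h
  have hpR : (0:ℝ) < p := lt_trans zero_lt_one ppos
  apply sq_norm_ne y hy 0
  have : (1:ℝ) = ‖y‖ ^ 2 * (p:ℝ)⁻¹ := by
    rw [← hc, h, norm_mul, norm_pow, Padic.norm_p]
  norm_num
  rw [eq_comm, mul_inv_eq_one₀ (ne_of_gt hpR)] at this
  rw [← this]

variable (hp2 : 2 < p) (u : ℤ_[p]) (hu : ‖u‖ = 1)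
  (husq : ¬ ∃ y : ℚ_[p], y ^ 2 = (u : ℚ_[p]))

include hp2 hu husq in
lemma unit_cases (w : ℤ_[p]) (hw : ‖w‖ = 1) :
    (∃ y : ℚ_[p], y ≠ 0 ∧ y ^ 2 = w) ∨ (∃ y : ℚ_[p], y ≠ 0 ∧ (u:ℚ_[p]) * y ^ 2 = w) := by
  have hw0 : (w : ℚ_[p]) ≠ 0 := by
    rw [PadicInt.coe_ne_zero]; intro h; rw [h] at hw; simp at hw
  by_cases hsq : IsSquare (PadicInt.toZMod w)
  · obtain ⟨y, hy⟩ := (padic_sq_iff hp2 w hw).mpr hsq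
    exact Or.inl ⟨y, by rintro rfl; simp at hy; exact hw0 hy.symm, hy⟩
  · obtain ⟨uu, huu⟩ := PadicInt.isUnit_iff.mpr hu
    set u' : ℤ_[p] := ((uu⁻¹ : ℤ_[p]ˣ) : ℤ_[p]) with hu'
    have huu' : u * u' = 1 := by rw [← huu, hu']; exact_mod_cast uu.mul_inv
    have hu'n : ‖u'‖ = 1 := by
      have : ‖u * u'‖ = 1 := by rw [huu']; simp
      rw [norm_mul, hu, one_mul] at this; exact this
    have hwu' : ‖w * u'‖ = 1 := by rw [norm_mul, hw, hu'n, one_mul]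
    have hzu : ¬ IsSquare (PadicInt.toZMod u) := fun h => husq ((padic_sq_iff hp2 u hu).mpr h)
    have hzu0 : PadicInt.toZMod u ≠ 0 := toZMod_ne_zero hu
    have hzw0 : PadicInt.toZMod w ≠ 0 := toZMod_ne_zero hw
    have hzu'0 : PadicInt.toZMod u' ≠ 0 := toZMod_ne_zero hu'n
    have hchi_u : quadraticChar (ZMod p) (PadicInt.toZMod u) = -1 :=
      quadraticChar_neg_one_iff_not_isSquare.mpr hzu
    have hchi_w : quadraticChar (ZMod p) (PadicInt.toZMod w) = -1 :=
      quadraticChar_neg_one_iff_not_isSquare.mpr hsq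
    have hchi_u' : quadraticChar (ZMod p) (PadicInt.toZMod u') = -1 := by
      have h1 : quadraticChar (ZMod p) (PadicInt.toZMod u) *
          quadraticChar (ZMod p) (PadicInt.toZMod u') = 1 := by
        rw [← map_mul, ← map_mul, huu', map_one, map_one]
      rw [hchi_u] at h1; linarith
    have hsq' : IsSquare (PadicInt.toZMod (w * u')) := by
      have h1 : quadraticChar (ZMod p) (PadicInt.toZMod (w * u')) = 1 := by
        rw [map_mul, map_mul, hchi_w, hchi_u']; ring
      exact (quadraticChar_one_iff_isSquare (by
        rw [map_mul]; exact mul_ne_zero hzw0 hzu'0)).mp h1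
    obtain ⟨y, hy⟩ := (padic_sq_iff hp2 (w * u') hwu').mpr hsq'
    refine Or.inr ⟨y, ?_, ?_⟩
    · rintro rfl
      have h0 : ((w * u' : ℤ_[p]) : ℚ_[p]) = 0 := by rw [← hy]; ring
      rw [PadicInt.coe_eq_zero] at h0; rw [h0] at hwu'; simp at hwu'
    · rw [hy]
      push_cast
      rw [show (u:ℚ_[p]) * ((w:ℚ_[p]) * (u':ℚ_[p])) = (w:ℚ_[p]) * ((u:ℚ_[p]) * (u':ℚ_[p])) by ring]
      rw [show (u:ℚ_[p]) * (u':ℚ_[p]) = ((u*u' : ℤ_[p]) : ℚ_[p]) by push_cast; ring, huu']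
      push_cast; ring

include hp2 hu husq in
lemma class_decomp (c : ℚ_[p]) (hc : c ≠ 0) :
    ∃ s : ℚ_[p], s ≠ 0 ∧ (c = s ^ 2 ∨ c = s ^ 2 * u ∨ c = s ^ 2 * p ∨
      c = s ^ 2 * ((u:ℚ_[p]) * p)) := by
  have hp0 : (p:ℚ_[p]) ≠ 0 := by
    have := (Fact.out : p.Prime).pos
    exact_mod_cast Nat.cast_ne_zero.mpr this.ne'
  set n : ℤ := c.valuation with hn
  set w₀ : ℚ_[p] := c * (p:ℚ_[p]) ^ (-n) with hw₀
  have hwn : ‖w₀‖ = 1 := by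
    rw [hw₀, norm_mul, norm_zpow, Padic.norm_p, Padic.norm_eq_zpow_neg_valuation hc, ← hn,
      inv_zpow, ← zpow_neg, neg_neg, ← zpow_add₀ (by positivity : (p:ℝ) ≠ 0)]
    simp
  set w : ℤ_[p] := ⟨w₀, hwn.le⟩ with hwdef
  have hcw : c = (w : ℚ_[p]) * (p:ℚ_[p]) ^ n := by
    show c = w₀ * _
    rw [hw₀, mul_assoc, ← zpow_add₀ hp0]
    simp
  have hwn' : ‖w‖ = 1 := hwn
  rcases Int.even_or_odd n with ⟨m, hm⟩ | ⟨m, hm⟩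
  · have hpn : (p:ℚ_[p]) ^ n = ((p:ℚ_[p]) ^ m) ^ 2 := by
      rw [← zpow_natCast, ← zpow_mul]
      norm_num [hm]; ring_nf
    rcases unit_cases hp2 u hu husq w hwn' with ⟨y, hy0, hy⟩ | ⟨y, hy0, hy⟩
    · exact ⟨y * (p:ℚ_[p]) ^ m, mul_ne_zero hy0 (zpow_ne_zero _ hp0),
        Or.inl (by rw [hcw, ← hy, hpn]; ring)⟩
    · exact ⟨y * (p:ℚ_[p]) ^ m, mul_ne_zero hy0 (zpow_ne_zero _ hp0),
        Or.inr (Or.inl (by rw [hcw, ← hy, hpn]; ring))⟩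
  · have hpn : (p:ℚ_[p]) ^ n = ((p:ℚ_[p]) ^ m) ^ 2 * p := by
      have h2 : ((p:ℚ_[p]) ^ m) ^ 2 = (p:ℚ_[p]) ^ (2 * m) := by
        rw [← zpow_natCast, ← zpow_mul]; norm_num; ring_nf
      rw [h2, hm, zpow_add₀ hp0, zpow_one]
    rcases unit_cases hp2 u hu husq w hwn' with ⟨y, hy0, hy⟩ | ⟨y, hy0, hy⟩
    · exact ⟨y * (p:ℚ_[p]) ^ m, mul_ne_zero hy0 (zpow_ne_zero _ hp0),
        Or.inr (Or.inr (Or.inl (by rw [hcw, ← hy, hpn]; ring)))⟩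
    · exact ⟨y * (p:ℚ_[p]) ^ m, mul_ne_zero hy0 (zpow_ne_zero _ hp0),
        Or.inr (Or.inr (Or.inr (by rw [hcw, ← hy, hpn]; ring)))⟩

section QF

variable {K : Type*} [Field K]

lemma wss_apply (a b : K) (x : Fin 2 → K) :
    weightedSumSquares K ![a, b] x = a * (x 0 * x 0) + b * (x 1 * x 1) := by
  rw [weightedSumSquares_apply, Fin.sum_univ_two]; simp [smul_eq_mul]

lemma aniso_of_not_sq (a b : K) (ha : a ≠ 0) (hb : b ≠ 0)
    (h : ∀ y : K, a * y ^ 2 ≠ -b) :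
    (weightedSumSquares K ![a, b]).Anisotropic := by
  intro x hx
  rw [wss_apply] at hx
  by_cases h1 : x 1 = 0
  · have h0 : x 0 = 0 := by
      rw [h1] at hx; simp at hx
      rcases hx with h | h
      · exact (ha h).elim
      · exact h
    funext i; fin_cases i <;> simp [h0, h1]
  · exfalso
    apply h (x 0 / x 1)
    field_simp
    linear_combination hx

lemma aniso_transfer {M₁ M₂ : Type*} [AddCommGroup M₁] [AddCommGroup M₂] [Module K M₁]
    [Module K M₂] {Q₁ : QuadraticMap K M₁ K} {Q₂ : QuadraticMap K M₂ K}
    (h : Q₁.Equivalent Q₂) (h1 : Q₁.Anisotropic) : Q₂.Anisotropic := by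
  obtain ⟨f⟩ := h
  intro x hx
  have h2 : Q₁ (f.symm x) = 0 := (f.symm.map_app x).trans hx
  have h0 := h1 _ h2
  exact (LinearEquiv.map_eq_zero_iff f.symm.toLinearEquiv).mp h0

lemma equiv_smul {M₁ M₂ : Type*} [AddCommGroup M₁] [AddCommGroup M₂] [Module K M₁]
    [Module K M₂] {Q₁ : QuadraticMap K M₁ K} {Q₂ : QuadraticMap K M₂ K} (t : K)
    (h : Q₁.Equivalent Q₂) : (t • Q₁).Equivalent (t • Q₂) := by
  obtain ⟨f⟩ := h
  exact ⟨⟨f.toLinearEquiv, fun x => by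
    show (t • Q₂) (f x) = (t • Q₁) x
    simp only [QuadraticMap.smul_apply, f.map_app]⟩⟩

lemma smul_wss (t a b : K) :
    t • weightedSumSquares K ![a, b] = weightedSumSquares K ![t * a, t * b] := by
  ext x
  rw [QuadraticMap.smul_apply, wss_apply, wss_apply, smul_eq_mul]
  ring

lemma scale_equiv (a₁ a₂ s₁ s₂ : K) (h₁ : s₁ ≠ 0) (h₂ : s₂ ≠ 0) :
    (weightedSumSquares K ![a₁ * s₁ ^ 2, a₂ * s₂ ^ 2]).Equivalent
      (weightedSumSquares K ![a₁, a₂]) := by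
  let s : Fin 2 → K := ![s₁, s₂]
  have hs : ∀ i, s i ≠ 0 := by intro i; fin_cases i <;> assumption
  let f : (Fin 2 → K) ≃ₗ[K] (Fin 2 → K) :=
    LinearEquiv.piCongrRight fun i => LinearEquiv.smulOfNeZero K K (s i) (hs i)
  refine ⟨⟨f, fun x => ?_⟩⟩
  show weightedSumSquares K ![a₁, a₂] (f x) =
    weightedSumSquares K ![a₁ * s₁ ^ 2, a₂ * s₂ ^ 2] x
  have hfx : ∀ i, f x i = s i * x i := fun i => by
    simp [f, LinearEquiv.piCongrRight_apply, LinearEquiv.smulOfNeZero,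
      LinearEquiv.smulOfUnit, smul_eq_mul]
  rw [wss_apply, wss_apply, hfx 0, hfx 1]
  show a₁ * (s₁ * x 0 * (s₁ * x 0)) + a₂ * (s₂ * x 1 * (s₂ * x 1)) = _
  ring

variable [Invertible (2:K)]

lemma discr_wss (a b : K) : QuadraticForm.discr' (weightedSumSquares K ![a, b]) = a * b := by
  have hM : ∀ i j, QuadraticForm.toMatrix' (weightedSumSquares K ![a, b]) i j =
      associated (R := K) (weightedSumSquares K ![a, b]) (Pi.single i 1) (Pi.single j 1) := by
    intro i j
    rw [QuadraticForm.toMatrix', LinearMap.toMatrix₂'_apply]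
  rw [QuadraticForm.discr', Matrix.det_fin_two, hM, hM, hM, hM]
  simp only [QuadraticMap.associated_apply, wss_apply]
  norm_num [Pi.single_apply]
  have h2 : (2:K) ≠ 0 := Invertible.ne_zero 2
  field_simp
  ring

lemma discr_invariant {Q₁ Q₂ : QuadraticMap K (Fin 2 → K) K} (h : Q₁.Equivalent Q₂) :
    ∃ d : K, d ≠ 0 ∧ QuadraticForm.discr' Q₁ = d ^ 2 * QuadraticForm.discr' Q₂ := by
  obtain ⟨f⟩ := h
  have hcomp : Q₂.comp (f.toLinearEquiv : (Fin 2 → K) →ₗ[K] (Fin 2 → K)) = Q₁ := by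
    ext x
    exact f.map_app x
  set A := LinearMap.toMatrix' (f.toLinearEquiv : (Fin 2 → K) →ₗ[K] (Fin 2 → K)) with hA
  have hdet : A.det ≠ 0 := by
    have hmul : A * LinearMap.toMatrix'
        (f.toLinearEquiv.symm : (Fin 2 → K) →ₗ[K] (Fin 2 → K)) = 1 := by
      rw [hA, ← LinearMap.toMatrix'_comp]
      simp [LinearMap.toMatrix'_id, ← LinearEquiv.coe_trans, -QuadraticMap.IsometryEquiv.coe_symm_toLinearEquiv]
    intro h0
    have := congrArg Matrix.det hmul
    rw [Matrix.det_mul, h0, zero_mul, Matrix.det_one] at this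
    exact zero_ne_one this
  refine ⟨A.det, hdet, ?_⟩
  have := QuadraticForm.discr'_comp (Q := Q₂) (f.toLinearEquiv : (Fin 2 → K) →ₗ[K] (Fin 2 → K))
  rw [hcomp] at this
  rw [this, ← hA, pow_two]

lemma discr_smul2 (t : K) (Q : QuadraticMap K (Fin 2 → K) K) :
    QuadraticForm.discr' (t • Q) = t ^ 2 * QuadraticForm.discr' Q := by
  rw [QuadraticForm.discr'_smul]
  norm_num

lemma reindex_equiv {ι κ : Type*} [Fintype ι] [Fintype κ] [DecidableEq ι] [DecidableEq κ]
    (e : ι ≃ κ) (w : ι → K) :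
    (weightedSumSquares K w).Equivalent (weightedSumSquares K (w ∘ e.symm)) := by
  let f : (κ → K) ≃ₗ[K] (ι → K) := LinearEquiv.funCongrLeft K K e
  refine ⟨⟨f.symm, fun x => ?_⟩⟩
  show weightedSumSquares K (w ∘ e.symm) (f.symm x) = weightedSumSquares K w x
  rw [weightedSumSquares_apply, weightedSumSquares_apply]
  have hfx : ∀ j, f.symm x j = x (e.symm j) := fun j => rfl
  simp only [hfx, Function.comp_apply]
  exact Equiv.sum_comp e.symm fun i => w i • (x i * x i)

lemma coeff_ne_zero {a b : K} (h : (weightedSumSquares K ![a, b]).Anisotropic) :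
    a ≠ 0 ∧ b ≠ 0 := by
  constructor
  · intro ha
    have := h ![1, 0] (by rw [wss_apply]; simp [ha])
    have := congrFun this 0
    simp at this
  · intro hb
    have := h ![0, 1] (by rw [wss_apply]; simp [hb])
    have := congrFun this 1
    simp at this

end QF

end Stmt0Aux

open Stmt0Aux
theorem stmt0 (p : ℕ) [Fact p.Prime] (hp2 : 2 < p)
    (u : ℤ_[p]) (hu : ‖u‖ = 1) (husq : ¬ ∃ y : ℚ_[p], y ^ 2 = (u : ℚ_[p]))
    (v : ℤ_[p]) (hv3 : p % 4 = 3 → v = -1) (hv1 : p % 4 = 1 → v = -u) :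
    (QuadraticMap.weightedSumSquares ℚ_[p] ![(1 : ℚ_[p]), -(v : ℚ_[p])]).Anisotropic ∧
    (QuadraticMap.weightedSumSquares ℚ_[p] ![(1 : ℚ_[p]), (p : ℚ_[p])]).Anisotropic ∧
    (QuadraticMap.weightedSumSquares ℚ_[p] ![(u : ℚ_[p]), (p : ℚ_[p])]).Anisotropic ∧
    (∀ Q : QuadraticForm ℚ_[p] (Fin 2 → ℚ_[p]), Q.Anisotropic →
      ∃ t : ℚ_[p], t ≠ 0 ∧
        (Q.Equivalent (t • QuadraticMap.weightedSumSquares ℚ_[p] ![(1 : ℚ_[p]), -(v : ℚ_[p])]) ∨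
         Q.Equivalent (t • QuadraticMap.weightedSumSquares ℚ_[p] ![(1 : ℚ_[p]), (p : ℚ_[p])]) ∨
         Q.Equivalent (t • QuadraticMap.weightedSumSquares ℚ_[p] ![(u : ℚ_[p]), (p : ℚ_[p])]))) ∧
    (∀ t : ℚ_[p], t ≠ 0 →
      ¬ (QuadraticMap.weightedSumSquares ℚ_[p] ![(1 : ℚ_[p]), -(v : ℚ_[p])]).Equivalent
          (t • QuadraticMap.weightedSumSquares ℚ_[p] ![(1 : ℚ_[p]), (p : ℚ_[p])]) ∧
      ¬ (QuadraticMap.weightedSumSquares ℚ_[p] ![(1 : ℚ_[p]), -(v : ℚ_[p])]).Equivalent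
          (t • QuadraticMap.weightedSumSquares ℚ_[p] ![(u : ℚ_[p]), (p : ℚ_[p])]) ∧
      ¬ (QuadraticMap.weightedSumSquares ℚ_[p] ![(1 : ℚ_[p]), (p : ℚ_[p])]).Equivalent
          (t • QuadraticMap.weightedSumSquares ℚ_[p] ![(u : ℚ_[p]), (p : ℚ_[p])])) := by
  classical
  letI : Invertible (2 : ℚ_[p]) := invertibleTwo
  have hp' : p.Prime := Fact.out
  have hp0 : (p:ℚ_[p]) ≠ 0 := Nat.cast_ne_zero.mpr hp'.pos.ne'
  have huK : (u:ℚ_[p]) ≠ 0 := by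
    rw [PadicInt.coe_ne_zero]; intro h; rw [h] at hu; simp at hu
  have huKn : ‖(u:ℚ_[p])‖ = 1 := by rw [PadicInt.padic_norm_e_of_padicInt, hu]
  have hp4 : p % 4 = 1 ∨ p % 4 = 3 := by
    have hodd : p % 2 = 1 := Nat.odd_iff.mp (hp'.odd_of_ne_two (by omega))
    omega
  have hv_eq : (v = -1 ∧ p % 4 = 3) ∨ (v = -u ∧ p % 4 = 1) := by
    rcases hp4 with h | h
    · exact Or.inr ⟨hv1 h, h⟩
    · exact Or.inl ⟨hv3 h, h⟩
  have hvn : ‖(v:ℚ_[p])‖ = 1 := by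
    rcases hv_eq with ⟨hve, _⟩ | ⟨hve, _⟩ <;> rw [hve] <;> push_cast <;>
      simp [norm_neg, huKn]
  have hvK : (v:ℚ_[p]) ≠ 0 := by
    intro h; rw [h] at hvn; simp at hvn
  -- v is not a square in ℚ_p
  have hvns : ¬ ∃ y : ℚ_[p], y ^ 2 = (v:ℚ_[p]) := by
    rcases hv_eq with ⟨hve, h43⟩ | ⟨hve, h41⟩
    · rintro ⟨y, hy⟩
      rw [hve] at hy
      have hsq : ∃ y : ℚ_[p], y ^ 2 = ((-1 : ℤ_[p]) : ℚ_[p]) := ⟨y, hy⟩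
      rw [padic_sq_iff hp2 (-1) (by simp)] at hsq
      rw [_root_.map_neg, map_one] at hsq
      exact ZMod.exists_sq_eq_neg_one_iff.mp hsq h43
    · rintro ⟨y, hy⟩
      rw [hve] at hy; push_cast at hy
      have hm1 : IsSquare (-1 : ZMod p) := ZMod.exists_sq_eq_neg_one_iff.mpr (by omega)
      obtain ⟨i, hi⟩ := (padic_sq_iff hp2 (-1) (by simp)).mpr
        (by rwa [_root_.map_neg, map_one])
      push_cast at hi
      exact husq ⟨i * y, by rw [mul_pow, hi, hy]; ring⟩
  refine ⟨?_, ?_, ?_, ?_, ?_⟩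
  · -- ![1, -v] anisotropic
    apply aniso_of_not_sq _ _ one_ne_zero (neg_ne_zero.mpr hvK)
    intro y hy
    exact hvns ⟨y, by rw [← neg_neg ((v:ℚ_[p])), ← hy]; ring⟩
  · -- ![1, p] anisotropic
    apply aniso_of_not_sq _ _ one_ne_zero hp0
    intro y hy
    apply no_sq_eq_unit_mul_p (-1 : ℚ_[p]) y (by simp)
    rw [show (-1 : ℚ_[p]) * p = -(p:ℚ_[p]) by ring, ← hy]; ring
  · -- ![u, p] anisotropic
    apply aniso_of_not_sq _ _ huK hp0
    intro y hy
    apply no_sq_eq_unit_mul_p (-(u:ℚ_[p])⁻¹) y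
      (by rw [norm_neg, norm_inv, huKn]; norm_num)
    rw [show y ^ 2 = (u:ℚ_[p])⁻¹ * ((u:ℚ_[p]) * y ^ 2) by field_simp, hy]
    ring
  · -- classification
    intro Q hQ
    obtain ⟨w, hw⟩ := QuadraticForm.equivalent_weightedSumSquares Q
    set e : Fin (Module.finrank ℚ_[p] (Fin 2 → ℚ_[p])) ≃ Fin 2 :=
      finCongr (Module.finrank_fin_fun ℚ_[p]) with he
    have h1 : Q.Equivalent (weightedSumSquares ℚ_[p] (w ∘ e.symm)) :=
      hw.trans (reindex_equiv e w)
    set a : ℚ_[p] := (w ∘ e.symm) 0 with hadef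
    set b : ℚ_[p] := (w ∘ e.symm) 1 with hbdef
    have hvec : (w ∘ e.symm) = ![a, b] := by
      funext i; fin_cases i <;> rfl
    rw [hvec] at h1
    obtain ⟨ha, hb⟩ := coeff_ne_zero (aniso_transfer h1 hQ)
    obtain ⟨s, hs, hcase⟩ := class_decomp hp2 u hu husq (b / a) (div_ne_zero hb ha)
    have step : ∀ κ : ℚ_[p], b / a = s ^ 2 * κ →
        Q.Equivalent (a • weightedSumSquares ℚ_[p] ![1, κ]) := by
      intro κ hcs
      rw [div_eq_iff ha] at hcs
      have hbeq : b = (a * κ) * s ^ 2 := by rw [hcs]; ring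
      have h2 : (weightedSumSquares ℚ_[p] ![a, b]).Equivalent
          (weightedSumSquares ℚ_[p] ![a, a * κ]) := by
        have := scale_equiv (K := ℚ_[p]) a (a * κ) 1 s one_ne_zero hs
        rw [show a * (1:ℚ_[p]) ^ 2 = a by ring, ← hbeq] at this
        exact this
      have h3 : a • weightedSumSquares ℚ_[p] ![1, κ] =
          weightedSumSquares ℚ_[p] ![a, a * κ] := by
        rw [smul_wss]; norm_num
      rw [h3]; exact h1.trans h2
    rcases hcase with hc1 | hc2 | hc3 | hc4
    · -- square class 1 : only possible if p % 4 = 3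
      have hQ1 := step 1 (by rw [hc1]; ring)
      have h43 : p % 4 = 3 := by
        by_contra hne
        obtain ⟨i, hi⟩ := (padic_sq_iff hp2 (-1) (by simp)).mpr
          (by rw [_root_.map_neg, map_one]; exact ZMod.exists_sq_eq_neg_one_iff.mpr hne)
        push_cast at hi
        have hii : i * i = -1 := by rw [← pow_two]; exact hi
        have haniso := aniso_transfer hQ1 hQ
        have h0 := haniso ![i, 1] (by
          rw [QuadraticMap.smul_apply, wss_apply]
          simp [hii])
        have := congrFun h0 1
        simp at this
      have hveq : -(v:ℚ_[p]) = 1 := by rw [hv3 h43]; push_cast; ring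
      exact ⟨a, ha, Or.inl (by rw [hveq]; exact hQ1)⟩
    · -- square class u : only possible if p % 4 = 1
      have hQ1 := step u hc2
      have h41 : p % 4 = 1 := by
        by_contra hne
        have h43 : p % 4 = 3 := by omega
        have hm1 : ¬ IsSquare (-1 : ZMod p) := fun h =>
          ZMod.exists_sq_eq_neg_one_iff.mp h h43
        have hzu : ¬ IsSquare (PadicInt.toZMod u) := fun h =>
          husq ((padic_sq_iff hp2 u hu).mpr h)
        have hzu0 : PadicInt.toZMod u ≠ 0 := toZMod_ne_zero hu
        have hsqmu : IsSquare (PadicInt.toZMod (-u)) := by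
          have hchi : quadraticChar (ZMod p) (PadicInt.toZMod (-u)) = 1 := by
            rw [_root_.map_neg, show (-(PadicInt.toZMod u)) = (-1) * PadicInt.toZMod u by ring,
              map_mul, quadraticChar_neg_one_iff_not_isSquare.mpr hm1,
              quadraticChar_neg_one_iff_not_isSquare.mpr hzu]
            ring
          exact (quadraticChar_one_iff_isSquare (by
            rw [_root_.map_neg, neg_ne_zero]; exact hzu0)).mp hchi
        obtain ⟨y, hy⟩ := (padic_sq_iff hp2 (-u) (by simp [hu])).mpr hsqmu
        push_cast at hy
        have haniso := aniso_transfer hQ1 hQ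
        have h0 := haniso ![y, 1] (by
          rw [QuadraticMap.smul_apply, wss_apply]
          have hyy : y * y = -(u:ℚ_[p]) := by rw [← pow_two]; exact hy
          simp [hyy])
        have := congrFun h0 1
        simp at this
      have hveq : -(v:ℚ_[p]) = u := by rw [hv1 h41]; push_cast; ring
      exact ⟨a, ha, Or.inl (by rw [hveq]; exact hQ1)⟩
    · exact ⟨a, ha, Or.inr (Or.inl (step p hc3))⟩
    · -- square class u * p
      have hQ1 := step ((u:ℚ_[p]) * p) hc4
      have h3 : a • weightedSumSquares ℚ_[p] ![1, (u:ℚ_[p]) * p] =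
          weightedSumSquares ℚ_[p] ![a, a * ((u:ℚ_[p]) * p)] := by
        rw [smul_wss]; norm_num
      have h5 : (weightedSumSquares ℚ_[p] ![a, a * ((u:ℚ_[p]) * p)]).Equivalent
          (weightedSumSquares ℚ_[p] ![(a / u) * u, (a / u) * p]) := by
        have := scale_equiv (K := ℚ_[p]) ((a / u) * u) ((a / u) * p) 1 u one_ne_zero huK
        rw [show (a / (u:ℚ_[p]) * u) * 1 ^ 2 = a by field_simp,
          show ((a / (u:ℚ_[p])) * p) * u ^ 2 = a * ((u:ℚ_[p]) * p) by field_simp] at this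
        exact this
      have h6 : (a / (u:ℚ_[p])) • weightedSumSquares ℚ_[p] ![(u:ℚ_[p]), (p:ℚ_[p])] =
          weightedSumSquares ℚ_[p] ![(a / u) * u, (a / u) * p] := smul_wss _ _ _
      refine ⟨a / u, div_ne_zero ha huK, Or.inr (Or.inr ?_)⟩
      rw [h6]
      rw [h3] at hQ1
      exact hQ1.trans h5
  · -- non-equivalence
    intro t ht
    refine ⟨?_, ?_, ?_⟩
    · intro h
      obtain ⟨d, hd, heq⟩ := discr_invariant h
      rw [discr_wss, discr_smul2, discr_wss] at heq
      apply no_unit_eq_sq_mul_p (-(v:ℚ_[p])) (d * t)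
        (by rw [norm_neg]; exact hvn) (mul_ne_zero hd ht)
      linear_combination heq
    · intro h
      obtain ⟨d, hd, heq⟩ := discr_invariant h
      rw [discr_wss, discr_smul2, discr_wss] at heq
      apply no_unit_eq_sq_mul_p (-(v:ℚ_[p]) * (u:ℚ_[p])⁻¹) (d * t)
        (by rw [norm_mul, norm_neg, norm_inv, hvn, huKn]; norm_num)
        (mul_ne_zero hd ht)
      field_simp
      linear_combination heq
    · intro h
      obtain ⟨d, hd, heq⟩ := discr_invariant h
      rw [discr_wss, discr_smul2, discr_wss] at heq
      refine husq ⟨(d * t)⁻¹, ?_⟩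
      have hdt : d * t ≠ 0 := mul_ne_zero hd ht
      have h1 : (1:ℚ_[p]) * p = (d ^ 2 * t ^ 2 * u) * p := by linear_combination heq
      have h2 := mul_right_cancel₀ hp0 h1
      field_simp
      linear_combination h2
end

section
/- Let p > 2 be a prime, let u be a unit of ℤ_p (‖u‖_p = 1) that is not a square in ℚ_p, and set v = -1 if p ≡ 3 (mod 4) and v = -u if p ≡ 1 (mod 4). Then the ternary quadratic form Q₊(x) = x₁² - v·x₂² + p·x₃² over ℚ_p is anisotropic, and every anisotropic quadratic form Q on ℚ_p³ is linearly equivalent to t·Q₊ for some t ∈ ℚ_p^×. -/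
open QuadraticMap

variable {K : Type*} [Field K]

noncomputable abbrev wss3 (a b c : K) : QuadraticForm K (Fin 3 → K) :=
  QuadraticMap.weightedSumSquares K ![a, b, c]

lemma wss3_apply (a b c : K) (x : Fin 3 → K) :
    wss3 a b c x = a * (x 0 * x 0) + b * (x 1 * x 1) + c * (x 2 * x 2) := by
  simp [QuadraticMap.weightedSumSquares_apply, Fin.sum_univ_three, smul_eq_mul]

lemma equiv_of_matrix {a b c a' b' c' : K} (M : Matrix (Fin 3) (Fin 3) K)
    (hdet : M.det ≠ 0)
    (h : ∀ x : Fin 3 → K, wss3 a b c (M.mulVec x) = wss3 a' b' c' x) :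
    (wss3 a' b' c').Equivalent (wss3 a b c) := by
  have hinv : Invertible M := M.invertibleOfIsUnitDet hdet.isUnit
  refine ⟨{ (M.toLinearEquiv' hinv) with map_app' := fun x => ?_ }⟩
  have happ : (M.toLinearEquiv' hinv) x = M.mulVec x := by
    have h2 := Matrix.toLinearEquiv'_apply M hinv
    calc (M.toLinearEquiv' hinv) x = (Matrix.toLin' M) x := by
          exact congrFun (congrArg DFunLike.coe h2) x
      _ = M.mulVec x := by rw [Matrix.toLin'_apply]
  simpa [happ] using h x

lemma mulVec_three (M : Matrix (Fin 3) (Fin 3) K) (x : Fin 3 → K) (i : Fin 3) :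
    M.mulVec x i = M i 0 * x 0 + M i 1 * x 1 + M i 2 * x 2 := by
  simp [Matrix.mulVec, dotProduct, Fin.sum_univ_three]

lemma wss3_scale {a b c A B C y₀ y₁ y₂ : K} (h0 : y₀ ≠ 0) (h1 : y₁ ≠ 0) (h2 : y₂ ≠ 0)
    (e0 : A = a * y₀ ^ 2) (e1 : B = b * y₁ ^ 2) (e2 : C = c * y₂ ^ 2) :
    (wss3 A B C).Equivalent (wss3 a b c) := by
  refine equiv_of_matrix (Matrix.of ![![y₀,0,0],![0,y₁,0],![0,0,y₂]]) ?_ fun x => ?_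
  · simp only [Matrix.det_fin_three, Matrix.of_apply]
    simp [Matrix.vecHead, Matrix.vecTail, h0, h1, h2]
  · rw [wss3_apply, wss3_apply, mulVec_three, mulVec_three, mulVec_three]
    simp only [Matrix.of_apply]
    simp [Matrix.vecHead, Matrix.vecTail, e0, e1, e2]
    ring

lemma wss3_swap01 (a b c : K) : (wss3 b a c).Equivalent (wss3 a b c) := by
  refine equiv_of_matrix (Matrix.of ![![0,1,0],![1,0,0],![0,0,1]]) ?_ fun x => ?_
  · simp only [Matrix.det_fin_three, Matrix.of_apply]
    simp [Matrix.vecHead, Matrix.vecTail]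
  · rw [wss3_apply, wss3_apply, mulVec_three, mulVec_three, mulVec_three]
    simp only [Matrix.of_apply]
    simp [Matrix.vecHead, Matrix.vecTail]
    ring

lemma wss3_swap02 (a b c : K) : (wss3 c b a).Equivalent (wss3 a b c) := by
  refine equiv_of_matrix (Matrix.of ![![0,0,1],![0,1,0],![1,0,0]]) ?_ fun x => ?_
  · simp only [Matrix.det_fin_three, Matrix.of_apply]
    simp [Matrix.vecHead, Matrix.vecTail]
  · rw [wss3_apply, wss3_apply, mulVec_three, mulVec_three, mulVec_three]
    simp only [Matrix.of_apply]
    simp [Matrix.vecHead, Matrix.vecTail]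
    ring

lemma wss3_swap12 (a b c : K) : (wss3 a c b).Equivalent (wss3 a b c) := by
  refine equiv_of_matrix (Matrix.of ![![1,0,0],![0,0,1],![0,1,0]]) ?_ fun x => ?_
  · simp only [Matrix.det_fin_three, Matrix.of_apply]
    simp [Matrix.vecHead, Matrix.vecTail]
  · rw [wss3_apply, wss3_apply, mulVec_three, mulVec_three, mulVec_three]
    simp only [Matrix.of_apply]
    simp [Matrix.vecHead, Matrix.vecTail]
    ring

lemma wss3_rot (a b c : K) : (wss3 b c a).Equivalent (wss3 a b c) :=
  (wss3_swap12 b a c).trans (wss3_swap01 a b c)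

lemma wss3_bin {a b c a' B : K} (ha' : a' ≠ 0)
    (x₀ y₀ : K) (hrep : a * x₀ ^ 2 + b * y₀ ^ 2 = a') (hB : B = a * b * a') :
    (wss3 a' B c).Equivalent (wss3 a b c) := by
  refine equiv_of_matrix (Matrix.of ![![x₀, -(b*y₀),0],![y₀, a*x₀,0],![0,0,1]]) ?_ fun x => ?_
  · have hdet : (Matrix.of ![![x₀, -(b*y₀),0],![y₀, a*x₀,0],![0,0,1]]).det = a' := by
      simp only [Matrix.det_fin_three, Matrix.of_apply]
      simp [Matrix.vecHead, Matrix.vecTail]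
      rw [← hrep]; ring
    rw [hdet]; exact ha'
  · rw [wss3_apply, wss3_apply, mulVec_three, mulVec_three, mulVec_three]
    simp only [Matrix.of_apply]
    simp [Matrix.vecHead, Matrix.vecTail]
    rw [hB, ← hrep]
    ring

lemma smul_wss3 {t a b c A B C : K} (e0 : A = t * a) (e1 : B = t * b) (e2 : C = t * c) :
    wss3 A B C = t • wss3 a b c := by
  ext x
  rw [QuadraticMap.smul_apply, wss3_apply, wss3_apply, e0, e1, e2, smul_eq_mul]
  ring

lemma equivalent_smul {M₁ M₂ : Type*} [AddCommGroup M₁] [AddCommGroup M₂] [Module K M₁]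
    [Module K M₂] {Q₁ : QuadraticForm K M₁} {Q₂ : QuadraticForm K M₂} (t : K)
    (h : Q₁.Equivalent Q₂) : (t • Q₁).Equivalent (t • Q₂) := by
  obtain ⟨f⟩ := h
  refine ⟨{ f.toLinearEquiv with map_app' := fun x => ?_ }⟩
  have hfx : f.toLinearEquiv x = f x := rfl
  simp only [QuadraticMap.smul_apply, LinearEquiv.toFun_eq_coe, hfx, f.map_app]

lemma aniso_of_equiv {M₁ M₂ : Type*} [AddCommGroup M₁] [AddCommGroup M₂] [Module K M₁]
    [Module K M₂] {Q₁ : QuadraticForm K M₁} {Q₂ : QuadraticForm K M₂}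
    (h : Q₁.Equivalent Q₂) (ha : Q₁.Anisotropic) : Q₂.Anisotropic := by
  obtain ⟨f⟩ := h
  intro x hx
  have h1 : Q₂ (f (f.symm x)) = Q₁ (f.symm x) := f.map_app _
  rw [show f (f.symm x) = x from f.toLinearEquiv.apply_symm_apply x] at h1
  have h0 := ha _ (h1.symm.trans hx)
  have := congrArg f h0
  rw [show f (f.symm x) = x from f.toLinearEquiv.apply_symm_apply x] at this
  simpa using this

lemma aniso_of_smul {M₁ : Type*} [AddCommGroup M₁] [Module K M₁]
    {Q : QuadraticForm K M₁} (t : K) (h : (t • Q).Anisotropic) : Q.Anisotropic := by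
  intro x hx
  exact h x (by rw [QuadraticMap.smul_apply, hx, smul_zero])

-- reindex lemma test
lemma wss_reindex {K : Type*} [Field K] {n m : ℕ} (e : Fin m ≃ Fin n) (w : Fin n → K) :
    (QuadraticMap.weightedSumSquares K w).Equivalent
      (QuadraticMap.weightedSumSquares K (w ∘ e)) := by
  refine ⟨{ LinearEquiv.funCongrLeft K K e with map_app' := fun x => ?_ }⟩
  have happ : (LinearEquiv.funCongrLeft K K e) x = x ∘ e := rfl
  simp only [LinearEquiv.toFun_eq_coe, happ, QuadraticMap.weightedSumSquares_apply]
  exact Equiv.sum_comp e (fun j => w j • (x j * x j))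

variable {p : ℕ} [hp : Fact p.Prime]

lemma toZMod_eq_zero_iff (z : ℤ_[p]) : PadicInt.toZMod z = 0 ↔ ‖z‖ < 1 := by
  rw [← RingHom.mem_ker, PadicInt.ker_toZMod, PadicInt.maximalIdeal_eq_span_p,
    Ideal.mem_span_singleton, ← PadicInt.norm_lt_one_iff_dvd]

lemma toZMod_ne_zero_iff (z : ℤ_[p]) : PadicInt.toZMod z ≠ 0 ↔ ‖z‖ = 1 := by
  rw [Ne, toZMod_eq_zero_iff, not_lt]
  constructor
  · intro h; exact le_antisymm (PadicInt.norm_le_one z) h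
  · intro h; rw [h]

lemma two_unit (hp2 : 2 < p) : ‖(2 : ℤ_[p])‖ = 1 := by
  rw [← toZMod_ne_zero_iff]
  have : (PadicInt.toZMod (2 : ℤ_[p])) = ((2:ℕ) : ZMod p) := by
    rw [show ((2:ℤ_[p])) = ((2:ℕ):ℤ_[p]) by norm_num, map_natCast]
  rw [this, Ne, ZMod.natCast_eq_zero_iff]
  intro h
  exact absurd (Nat.le_of_dvd (by norm_num) h) (by omega)

lemma padic_sq (hp2 : 2 < p) (w : ℤ_[p]) (hw : ‖w‖ = 1)
    (hsq : IsSquare (PadicInt.toZMod w)) : ∃ z : ℤ_[p], z ^ 2 = w := by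
  obtain ⟨r, hr⟩ := hsq
  set a : ℤ_[p] := ((r.val : ℕ) : ℤ_[p]) with ha
  have hra : PadicInt.toZMod a = r := by
    rw [ha, map_natCast, ZMod.natCast_val, ZMod.cast_id]
  have haz : PadicInt.toZMod (a ^ 2 - w) = 0 := by
    rw [RingHom.map_sub, RingHom.map_pow, hra, hr]; ring
  have hlt : ‖a ^ 2 - w‖ < 1 := (toZMod_eq_zero_iff _).mp haz
  have har : PadicInt.toZMod a ≠ 0 := by
    rw [hra]
    intro h0
    rw [h0, mul_zero] at hr
    exact ((toZMod_ne_zero_iff w).mpr hw) hr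
  have hanorm : ‖a‖ = 1 := (toZMod_ne_zero_iff a).mp har
  set F : Polynomial ℤ_[p] := Polynomial.X ^ 2 - Polynomial.C w with hF
  have hFeval : ∀ z : ℤ_[p], F.eval z = z ^ 2 - w := by intro z; simp [hF]
  have hFderiv : ∀ z : ℤ_[p], F.derivative.eval z = 2 * z := by
    intro z; simp [hF, Polynomial.derivative_sub]; left; norm_num
  have hnorm : ‖F.eval a‖ < ‖F.derivative.eval a‖ ^ 2 := by
    rw [hFeval, hFderiv, norm_mul, two_unit hp2, hanorm]
    simpa using hlt
  obtain ⟨z, hz, -⟩ := hensels_lemma hnorm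
  rw [Polynomial.coe_aeval_eq_eval, hFeval] at hz
  exact ⟨z, sub_eq_zero.mp hz⟩

lemma ns_mul_ns {a b : ZMod p} (ha : a ≠ 0) (hb : b ≠ 0)
    (hA : ¬IsSquare a) (hB : ¬IsSquare b) : IsSquare (a * b) := by
  have h1 : quadraticChar (ZMod p) a = -1 := quadraticChar_neg_one_iff_not_isSquare.mpr hA
  have h2 : quadraticChar (ZMod p) b = -1 := quadraticChar_neg_one_iff_not_isSquare.mpr hB
  have h3 : quadraticChar (ZMod p) (a * b) = 1 := by rw [map_mul, h1, h2]; ring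
  exact (quadraticChar_one_iff_isSquare (mul_ne_zero ha hb)).mp h3

lemma unit_square_toZMod (w : ℤ_[p]) (hw : ‖w‖ = 1) (h : ∃ y : ℚ_[p], y ^ 2 = (w : ℚ_[p])) :
    IsSquare (PadicInt.toZMod w) := by
  obtain ⟨y, hy⟩ := h
  have hy1 : ‖y‖ ≤ 1 := by
    have h2 : ‖y‖ ^ 2 = 1 := by
      rw [← norm_pow, hy, ← PadicInt.norm_def, hw]
    nlinarith [norm_nonneg y]
  set z : ℤ_[p] := ⟨y, hy1⟩ with hz
  have hzw : z ^ 2 = w := by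
    apply Subtype.ext
    push_cast [hz]
    exact hy
  rw [← hzw, RingHom.map_pow]
  exact ⟨PadicInt.toZMod z, by ring⟩

lemma coe_ne_zero_of_norm_one {z : ℤ_[p]} (hz : ‖z‖ = 1) : (z : ℚ_[p]) ≠ 0 := by
  intro h
  rw [PadicInt.norm_def, h, norm_zero] at hz
  norm_num at hz

lemma unit_class (hp2 : 2 < p) (v : ℤ_[p]) (hv : ‖v‖ = 1)
    (hvns : ¬IsSquare (PadicInt.toZMod v)) (w : ℚ_[p]) (hw : ‖w‖ = 1) :
    (∃ k : ℚ_[p], k ≠ 0 ∧ w = k ^ 2) ∨ (∃ k : ℚ_[p], k ≠ 0 ∧ w = (v : ℚ_[p]) * k ^ 2) := by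
  set z : ℤ_[p] := ⟨w, le_of_eq hw⟩ with hzdef
  have hznorm : ‖z‖ = 1 := by rw [PadicInt.norm_def]; exact hw
  have hwne : w ≠ 0 := by
    intro h; rw [h, norm_zero] at hw; norm_num at hw
  have hvne : (v : ℚ_[p]) ≠ 0 := coe_ne_zero_of_norm_one hv
  by_cases hsq : IsSquare (PadicInt.toZMod z)
  · left
    obtain ⟨y, hy⟩ := padic_sq hp2 z hznorm hsq
    refine ⟨(y : ℚ_[p]), ?_, ?_⟩
    · intro h0
      apply hwne
      have : ((y ^ 2 : ℤ_[p]) : ℚ_[p]) = w := by rw [hy]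
      push_cast at this
      rw [← this, h0]; ring
    · have : ((y ^ 2 : ℤ_[p]) : ℚ_[p]) = w := by rw [hy]
      push_cast at this
      rw [this]
  · right
    have hmz : ‖z * v‖ = 1 := by rw [norm_mul, hznorm, hv]; ring
    have hmzsq : IsSquare (PadicInt.toZMod (z * v)) := by
      rw [RingHom.map_mul]
      exact ns_mul_ns ((toZMod_ne_zero_iff z).mpr hznorm) ((toZMod_ne_zero_iff v).mpr hv) hsq hvns
    obtain ⟨y, hy⟩ := padic_sq hp2 (z * v) hmz hmzsq
    have hyq : ((y : ℚ_[p])) ^ 2 = w * (v : ℚ_[p]) := by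
      have : ((y ^ 2 : ℤ_[p]) : ℚ_[p]) = ((z * v : ℤ_[p]) : ℚ_[p]) := by rw [hy]
      push_cast at this
      rw [this]
    refine ⟨(y : ℚ_[p]) / (v : ℚ_[p]), ?_, ?_⟩
    · have hyne : (y : ℚ_[p]) ≠ 0 := by
        intro h0
        rw [h0] at hyq
        exact mul_ne_zero hwne hvne (by rw [← hyq]; ring)
      exact div_ne_zero hyne hvne
    · field_simp
      rw [hyq]

lemma sqclass (hp2 : 2 < p) (v : ℤ_[p]) (hv : ‖v‖ = 1)
    (hvns : ¬IsSquare (PadicInt.toZMod v)) (x : ℚ_[p]) (hx : x ≠ 0) :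
    ∃ k s : ℚ_[p], k ≠ 0 ∧
      (s = 1 ∨ s = (v : ℚ_[p]) ∨ s = (p : ℚ_[p]) ∨ s = (v : ℚ_[p]) * (p : ℚ_[p])) ∧
      x = s * k ^ 2 := by
  have hp0 : (p : ℚ_[p]) ≠ 0 := by
    exact_mod_cast Nat.cast_ne_zero.mpr hp.out.ne_zero
  have hpR : (0 : ℝ) < (p : ℝ) := by exact_mod_cast hp.out.pos
  set n : ℤ := x.valuation with hn
  set w : ℚ_[p] := x * (p : ℚ_[p]) ^ (-n) with hwdef
  have hw : ‖w‖ = 1 := by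
    rw [hwdef, norm_mul, Padic.norm_eq_zpow_neg_valuation hx, Padic.norm_p_zpow, ← hn, neg_neg,
      ← Real.rpow_intCast, ← Real.rpow_intCast, ← Real.rpow_add hpR]
    norm_num
  have hxw : x = w * (p : ℚ_[p]) ^ n := by
    rw [hwdef, mul_assoc, ← zpow_add₀ hp0]
    norm_num
  obtain ⟨m, hm⟩ | ⟨m, hm⟩ := Int.even_or_odd n
  · have hpn : (p : ℚ_[p]) ^ n = ((p : ℚ_[p]) ^ m) ^ 2 := by
      rw [← zpow_natCast ((p:ℚ_[p])^m) 2, ← zpow_mul, hm]; ring_nf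
    have hpm : (p : ℚ_[p]) ^ m ≠ 0 := zpow_ne_zero _ hp0
    obtain ⟨k, hk, hkw⟩ | ⟨k, hk, hkw⟩ := unit_class hp2 v hv hvns w hw
    · exact ⟨k * (p : ℚ_[p]) ^ m, 1, mul_ne_zero hk hpm, Or.inl rfl, by
        rw [hxw, hkw, hpn]; ring⟩
    · exact ⟨k * (p : ℚ_[p]) ^ m, (v : ℚ_[p]), mul_ne_zero hk hpm, Or.inr (Or.inl rfl), by
        rw [hxw, hkw, hpn]; ring⟩
  · have h1 : (p : ℚ_[p]) ^ (2*m) = ((p : ℚ_[p]) ^ m) ^ 2 := by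
      rw [← zpow_natCast ((p:ℚ_[p])^m) 2, ← zpow_mul]; ring_nf
    have hpn : (p : ℚ_[p]) ^ n = (p : ℚ_[p]) * ((p : ℚ_[p]) ^ m) ^ 2 := by
      rw [hm, zpow_add₀ hp0, h1, zpow_one]; ring
    have hpm : (p : ℚ_[p]) ^ m ≠ 0 := zpow_ne_zero _ hp0
    obtain ⟨k, hk, hkw⟩ | ⟨k, hk, hkw⟩ := unit_class hp2 v hv hvns w hw
    · exact ⟨k * (p : ℚ_[p]) ^ m, (p : ℚ_[p]), mul_ne_zero hk hpm, Or.inr (Or.inr (Or.inl rfl)),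
        by rw [hxw, hkw, hpn]; ring⟩
    · exact ⟨k * (p : ℚ_[p]) ^ m, (v : ℚ_[p]) * (p : ℚ_[p]), mul_ne_zero hk hpm,
        Or.inr (Or.inr (Or.inr rfl)), by rw [hxw, hkw, hpn]; ring⟩

lemma rep_aux (hp2 : 2 < p) (α β γ : ℤ_[p]) (hα : ‖α‖ = 1) (hβ : ‖β‖ = 1) (hγ : ‖γ‖ = 1)
    (A B : ZMod p) (hA : A ≠ 0)
    (hab : PadicInt.toZMod α * A ^ 2 + PadicInt.toZMod β * B ^ 2 = PadicInt.toZMod γ) :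
    ∃ x y : ℤ_[p], α * x ^ 2 + β * y ^ 2 = γ := by
  set y₀ : ℤ_[p] := ((B.val : ℕ) : ℤ_[p]) with hy₀
  have hy₀bar : PadicInt.toZMod y₀ = B := by
    rw [hy₀, map_natCast, ZMod.natCast_val, ZMod.cast_id]
  set w : ℤ_[p] := γ - β * y₀ ^ 2 with hwdef
  have hwbar : PadicInt.toZMod w = PadicInt.toZMod α * A ^ 2 := by
    rw [hwdef, RingHom.map_sub, RingHom.map_mul, RingHom.map_pow, hy₀bar, ← hab]; ring
  have hαbar : PadicInt.toZMod α ≠ 0 := (toZMod_ne_zero_iff α).mpr hα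
  have hwbar_ne : PadicInt.toZMod w ≠ 0 := by
    rw [hwbar]
    exact mul_ne_zero hαbar (pow_ne_zero _ hA)
  have hwnorm : ‖w‖ = 1 := (toZMod_ne_zero_iff w).mp hwbar_ne
  have hαu : IsUnit α := PadicInt.isUnit_iff.mpr hα
  obtain ⟨U, hU⟩ := hαu
  set ε : ℤ_[p] := (↑U⁻¹ : ℤ_[p]) * w with hεdef
  have hUinv : PadicInt.toZMod (↑U⁻¹ : ℤ_[p]) * PadicInt.toZMod α = 1 := by
    rw [← RingHom.map_mul, ← hU, ← Units.val_mul, inv_mul_cancel]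
    simp
  have hεbar : PadicInt.toZMod ε = A ^ 2 := by
    rw [hεdef, RingHom.map_mul, hwbar, ← mul_assoc, hUinv]; ring
  have hεnorm : ‖ε‖ = 1 := by
    apply (toZMod_ne_zero_iff ε).mp
    rw [hεbar]
    exact pow_ne_zero _ hA
  have hεsq : IsSquare (PadicInt.toZMod ε) := by rw [hεbar]; exact ⟨A, by ring⟩
  obtain ⟨x, hx⟩ := padic_sq hp2 ε hεnorm hεsq
  refine ⟨x, y₀, ?_⟩
  have hαε : α * ε = w := by
    rw [hεdef, ← mul_assoc, ← hU, ← Units.val_mul, mul_inv_cancel]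
    simp
  rw [hx, hαε, hwdef]; ring

lemma rep (hp2 : 2 < p) (α β γ : ℤ_[p]) (hα : ‖α‖ = 1) (hβ : ‖β‖ = 1) (hγ : ‖γ‖ = 1) :
    ∃ x y : ℤ_[p], α * x ^ 2 + β * y ^ 2 = γ := by
  have hcard : Fintype.card (ZMod p) % 2 = 1 := by
    rw [ZMod.card]
    exact Nat.odd_iff.mp (hp.out.odd_of_ne_two (by omega))
  have hαbar : PadicInt.toZMod α ≠ 0 := (toZMod_ne_zero_iff α).mpr hα
  have hβbar : PadicInt.toZMod β ≠ 0 := (toZMod_ne_zero_iff β).mpr hβ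
  have hγbar : PadicInt.toZMod γ ≠ 0 := (toZMod_ne_zero_iff γ).mpr hγ
  obtain ⟨A, B, hAB⟩ := FiniteField.exists_root_sum_quadratic
    (f := Polynomial.C (PadicInt.toZMod α) * Polynomial.X ^ 2)
    (g := Polynomial.C (PadicInt.toZMod β) * Polynomial.X ^ 2 - Polynomial.C (PadicInt.toZMod γ))
    (Polynomial.degree_C_mul_X_pow 2 hαbar)
    (by
      rw [Polynomial.degree_sub_eq_left_of_degree_lt]
      · exact Polynomial.degree_C_mul_X_pow 2 hβbar
      · rw [Polynomial.degree_C_mul_X_pow 2 hβbar]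
        exact lt_of_le_of_lt (Polynomial.degree_C_le) (by norm_num))
    hcard
  simp only [Polynomial.eval_sub, Polynomial.eval_mul, Polynomial.eval_pow, Polynomial.eval_C,
    Polynomial.eval_X] at hAB
  have hab : PadicInt.toZMod α * A ^ 2 + PadicInt.toZMod β * B ^ 2 = PadicInt.toZMod γ := by
    linear_combination hAB
  by_cases hA : A = 0
  · have hB : B ≠ 0 := by
      intro hB
      rw [hA, hB] at hab
      simp at hab
      exact hγbar hab.symm
    obtain ⟨x, y, hxy⟩ := rep_aux hp2 β α γ hβ hα hγ B A hB (by linear_combination hab)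
    exact ⟨y, x, by linear_combination hxy⟩
  · exact rep_aux hp2 α β γ hα hβ hγ A B hA hab

lemma repQ (hp2 : 2 < p) (α β γ : ℚ_[p]) (hα : ‖α‖ = 1) (hβ : ‖β‖ = 1) (hγ : ‖γ‖ = 1) :
    ∃ x y : ℚ_[p], α * x ^ 2 + β * y ^ 2 = γ := by
  obtain ⟨x, y, h⟩ := rep hp2 ⟨α, le_of_eq hα⟩ ⟨β, le_of_eq hβ⟩ ⟨γ, le_of_eq hγ⟩
    (by exact hα) (by exact hβ)
    (by exact hγ)
  refine ⟨(x : ℚ_[p]), (y : ℚ_[p]), ?_⟩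
  have := congrArg (fun z : ℤ_[p] => (z : ℚ_[p])) h
  push_cast at this
  exact this

section Main

variable {p : ℕ} [hp : Fact p.Prime]

lemma unitcon (hp2 : 2 < p) (α β γ d A B C : ℚ_[p]) (hα : ‖α‖ = 1) (hβ : ‖β‖ = 1)
    (hγ : ‖γ‖ = 1) (eA : A = d * α) (eB : B = d * β) (eC : C = d * γ) :
    ¬ (wss3 A B C).Anisotropic := by
  obtain ⟨x, y, hxy⟩ := repQ hp2 α β (-γ) hα hβ (by rw [norm_neg]; exact hγ)
  intro han
  have hval : wss3 A B C ![x, y, 1] = 0 := by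
    rw [wss3_apply]
    simp only [Matrix.cons_val_zero, Matrix.cons_val_one, Matrix.head_cons,
      Matrix.cons_val_two, Matrix.tail_cons]
    rw [eA, eB, eC]
    linear_combination d * hxy
  have h0 := han _ hval
  have := congrFun h0 2
  simp at this

lemma core (hp2 : 2 < p) (v : ℤ_[p]) (hv : ‖v‖ = 1) (hvns : ¬IsSquare (PadicInt.toZMod v))
    (α β γ : ℚ_[p]) (hα : ‖α‖ = 1) (hβ : ‖β‖ = 1) (hγ : ‖γ‖ = 1)
    (han : (wss3 α β ((p : ℚ_[p]) * γ)).Anisotropic) :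
    ∃ t : ℚ_[p], t ≠ 0 ∧ (wss3 α β ((p : ℚ_[p]) * γ)).Equivalent
      (t • wss3 1 (-(v : ℚ_[p])) (p : ℚ_[p])) := by
  have hαne : α ≠ 0 := fun h => by rw [h, norm_zero] at hα; norm_num at hα
  have hβne : β ≠ 0 := fun h => by rw [h, norm_zero] at hβ; norm_num at hβ
  have hγne : γ ≠ 0 := fun h => by rw [h, norm_zero] at hγ; norm_num at hγ
  have hw : ‖-(α * β)‖ = 1 := by rw [norm_neg, norm_mul, hα, hβ]; ring
  have hclass := unit_class hp2 v hv hvns (-(α * β)) hw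
  have hns : ¬ ∃ k : ℚ_[p], k ≠ 0 ∧ -(α * β) = k ^ 2 := by
    rintro ⟨k, hk, hkk⟩
    have hval : wss3 α β ((p : ℚ_[p]) * γ) ![k, α, 0] = 0 := by
      rw [wss3_apply]
      simp only [Matrix.cons_val_zero, Matrix.cons_val_one, Matrix.head_cons,
        Matrix.cons_val_two, Matrix.tail_cons]
      linear_combination -α * hkk
    have h0 := han _ hval
    have := congrFun h0 0
    simp at this
    exact hk this
  obtain ⟨k, hk, hkk⟩ := hclass.resolve_left hns
  -- α * β = -(v k²)
  obtain ⟨x, y, hxy⟩ := repQ hp2 α β γ hα hβ hγ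
  have E1 : (wss3 γ (α * β * γ) ((p : ℚ_[p]) * γ)).Equivalent (wss3 α β ((p : ℚ_[p]) * γ)) :=
    wss3_bin hγne x y hxy rfl
  have E2 : (wss3 γ (α * β * γ) ((p : ℚ_[p]) * γ)).Equivalent
      (wss3 γ (-(v : ℚ_[p]) * γ) ((p : ℚ_[p]) * γ)) :=
    wss3_scale one_ne_zero hk one_ne_zero (by ring) (by linear_combination -γ * hkk) (by ring)
  have E3 : wss3 γ (-(v : ℚ_[p]) * γ) ((p : ℚ_[p]) * γ) =
      γ • wss3 1 (-(v : ℚ_[p])) (p : ℚ_[p]) :=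
    smul_wss3 (by ring) (by ring) (by ring)
  exact ⟨γ, hγne, (E1.symm.trans E2).trans (by rw [← E3])⟩

lemma case_two_p (hp2 : 2 < p) (v : ℤ_[p]) (hv : ‖v‖ = 1)
    (hvns : ¬IsSquare (PadicInt.toZMod v))
    (α β γ : ℚ_[p]) (hα : ‖α‖ = 1) (hβ : ‖β‖ = 1) (hγ : ‖γ‖ = 1)
    (han : (wss3 α ((p : ℚ_[p]) * β) ((p : ℚ_[p]) * γ)).Anisotropic) :
    ∃ t : ℚ_[p], t ≠ 0 ∧ (wss3 α ((p : ℚ_[p]) * β) ((p : ℚ_[p]) * γ)).Equivalent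
      (t • wss3 1 (-(v : ℚ_[p])) (p : ℚ_[p])) := by
  set P : ℚ_[p] := (p : ℚ_[p]) with hPdef
  have hP : P ≠ 0 := by
    rw [hPdef]
    exact_mod_cast Nat.cast_ne_zero.mpr hp.out.ne_zero
  have E1 : (wss3 (P * α) (β * P ^ 2) (γ * P ^ 2)).Equivalent (wss3 (P * α) β γ) :=
    wss3_scale one_ne_zero hP hP (by ring) rfl rfl
  have E2 : (wss3 β γ (P * α)).Equivalent (wss3 (P * α) β γ) := wss3_rot _ _ _
  have C : (wss3 (P * α) (β * P ^ 2) (γ * P ^ 2)).Equivalent (wss3 β γ (P * α)) :=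
    E1.trans E2.symm
  have Eq0 : wss3 α (P * β) (P * γ) = P⁻¹ • wss3 (P * α) (β * P ^ 2) (γ * P ^ 2) :=
    smul_wss3 (by field_simp) (by field_simp) (by field_simp)
  have Esmul : (P⁻¹ • wss3 (P * α) (β * P ^ 2) (γ * P ^ 2)).Equivalent
      (P⁻¹ • wss3 β γ (P * α)) := equivalent_smul _ C
  have htrans : (wss3 α (P * β) (P * γ)).Equivalent (P⁻¹ • wss3 β γ (P * α)) := by
    rw [Eq0]; exact Esmul
  have anis : (wss3 β γ (P * α)).Anisotropic :=
    aniso_of_smul P⁻¹ (aniso_of_equiv htrans han)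
  obtain ⟨t, ht, hteq⟩ := core hp2 v hv hvns β γ α hβ hγ hα anis
  refine ⟨P⁻¹ * t, mul_ne_zero (inv_ne_zero hP) ht, ?_⟩
  refine htrans.trans ?_
  have := equivalent_smul (K := ℚ_[p]) P⁻¹ hteq
  rw [smul_smul] at this
  exact this

lemma class_split (v : ℤ_[p]) (hv : ‖v‖ = 1) (s : ℚ_[p])
    (hs : s = 1 ∨ s = (v : ℚ_[p]) ∨ s = (p : ℚ_[p]) ∨ s = (v : ℚ_[p]) * (p : ℚ_[p])) :
    ∃ ε : ℚ_[p], ‖ε‖ = 1 ∧ (s = ε ∨ s = (p : ℚ_[p]) * ε) := by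
  have hvQ : ‖(v : ℚ_[p])‖ = 1 := by rw [← PadicInt.norm_def]; exact hv
  rcases hs with h | h | h | h
  · exact ⟨1, norm_one, Or.inl h⟩
  · exact ⟨(v : ℚ_[p]), hvQ, Or.inl h⟩
  · exact ⟨1, norm_one, Or.inr (by rw [h, mul_one])⟩
  · exact ⟨(v : ℚ_[p]), hvQ, Or.inr (by rw [h, mul_comm])⟩

end Main

section Main2

variable {p : ℕ} [hp : Fact p.Prime]

lemma part1 (hp2 : 2 < p) (v : ℤ_[p]) (hv : ‖v‖ = 1)
    (hvns : ¬IsSquare (PadicInt.toZMod v)) :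
    (wss3 1 (-(v : ℚ_[p])) (p : ℚ_[p])).Anisotropic := by
  intro x hx
  by_contra hx0
  obtain ⟨i, -, himax⟩ := Finset.exists_max_image Finset.univ (fun j => ‖x j‖)
    ⟨0, Finset.mem_univ 0⟩
  have hxine : x i ≠ 0 := by
    intro h
    apply hx0
    funext j
    have := himax j (Finset.mem_univ j)
    rw [h, norm_zero] at this
    exact norm_le_zero_iff.mp this
  have hle : ∀ j, ‖x j / x i‖ ≤ 1 := by
    intro j
    rw [norm_div]
    exact div_le_one_of_le₀ (himax j (Finset.mem_univ j)) (norm_nonneg _)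
  set y : Fin 3 → ℤ_[p] := fun j => ⟨x j / x i, hle j⟩ with hydef
  rw [wss3_apply] at hx
  have EQcoe : (x 0 / x i) ^ 2 - (v : ℚ_[p]) * (x 1 / x i) ^ 2
      + (p : ℚ_[p]) * (x 2 / x i) ^ 2 = 0 := by
    field_simp
    linear_combination hx
  have EZ : y 0 ^ 2 - v * y 1 ^ 2 + (p : ℤ_[p]) * y 2 ^ 2 = 0 := by
    apply Subtype.coe_injective
    push_cast
    exact EQcoe
  have bar := congrArg PadicInt.toZMod EZ
  simp only [RingHom.map_add, RingHom.map_sub, RingHom.map_mul, RingHom.map_pow,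
    map_natCast, ZMod.natCast_self, RingHom.map_zero, zero_mul] at bar
  have B1 : PadicInt.toZMod (y 0) ^ 2 - PadicInt.toZMod v * PadicInt.toZMod (y 1) ^ 2 = 0 := by
    linear_combination bar
  have hy1bar : PadicInt.toZMod (y 1) = 0 := by
    by_contra h1
    apply hvns
    refine ⟨PadicInt.toZMod (y 0) * (PadicInt.toZMod (y 1))⁻¹, ?_⟩
    field_simp
    linear_combination -B1
  have hy0bar : PadicInt.toZMod (y 0) = 0 := by
    have : PadicInt.toZMod (y 0) ^ 2 = 0 := by rw [hy1bar] at B1; linear_combination B1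
    exact pow_eq_zero_iff (n := 2) (by norm_num) |>.mp this
  have hpZ : (p : ℤ_[p]) ≠ 0 := Nat.cast_ne_zero.mpr hp.out.ne_zero
  obtain ⟨a, ha⟩ := (PadicInt.norm_lt_one_iff_dvd _).mp ((toZMod_eq_zero_iff _).mp hy0bar)
  obtain ⟨b, hb⟩ := (PadicInt.norm_lt_one_iff_dvd _).mp ((toZMod_eq_zero_iff _).mp hy1bar)
  have hy2bar : PadicInt.toZMod (y 2) = 0 := by
    have hfac : (p : ℤ_[p]) * ((p : ℤ_[p]) * a ^ 2 - v * ((p : ℤ_[p]) * b ^ 2) + y 2 ^ 2)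
        = (p : ℤ_[p]) * 0 := by
      rw [mul_zero, ← EZ, ha, hb]
      ring
    have hred := mul_left_cancel₀ hpZ hfac
    have := congrArg PadicInt.toZMod hred
    simp only [RingHom.map_add, RingHom.map_sub, RingHom.map_mul, RingHom.map_pow,
      map_natCast, ZMod.natCast_self, RingHom.map_zero, zero_mul] at this
    have h2 : PadicInt.toZMod (y 2) ^ 2 = 0 := by linear_combination this
    exact pow_eq_zero_iff (n := 2) (by norm_num) |>.mp h2
  have hyi : y i = 1 := by
    apply Subtype.coe_injective
    show x i / x i = ((1 : ℤ_[p]) : ℚ_[p])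
    rw [div_self hxine]
    norm_num
  have hzero : PadicInt.toZMod (y i) = 0 := by fin_cases i <;> assumption
  rw [hyi, RingHom.map_one] at hzero
  exact one_ne_zero hzero

end Main2

open scoped Matrix

theorem stmt1 (p : ℕ) [Fact p.Prime] (hp2 : 2 < p)
    (u : ℤ_[p]) (hu : ‖u‖ = 1) (husq : ¬ ∃ y : ℚ_[p], y ^ 2 = (u : ℚ_[p]))
    (v : ℤ_[p]) (hv3 : p % 4 = 3 → v = -1) (hv1 : p % 4 = 1 → v = -u) :
    (QuadraticMap.weightedSumSquares ℚ_[p]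
        ![(1 : ℚ_[p]), -(v : ℚ_[p]), (p : ℚ_[p])]).Anisotropic ∧
    (∀ Q : QuadraticForm ℚ_[p] (Fin 3 → ℚ_[p]), Q.Anisotropic →
      ∃ t : ℚ_[p], t ≠ 0 ∧
        Q.Equivalent (t • QuadraticMap.weightedSumSquares ℚ_[p]
          ![(1 : ℚ_[p]), -(v : ℚ_[p]), (p : ℚ_[p])])) := by
  have hprime : p.Prime := Fact.out
  have hodd : p % 2 = 1 := Nat.odd_iff.mp (hprime.odd_of_ne_two (by omega))
  have h4 : p % 4 = 1 ∨ p % 4 = 3 := by omega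
  have hv : ‖v‖ = 1 := by
    rcases h4 with h | h
    · rw [hv1 h, norm_neg]; exact hu
    · rw [hv3 h, norm_neg, norm_one]
  have hvns : ¬IsSquare (PadicInt.toZMod v) := by
    rcases h4 with h | h
    · rw [hv1 h]
      intro hs
      rw [RingHom.map_neg] at hs
      have hm1 : IsSquare (-1 : ZMod p) := ZMod.exists_sq_eq_neg_one_iff.mpr (by omega)
      have husq' : IsSquare (PadicInt.toZMod u) := by
        have := hm1.mul hs
        simpa using this
      obtain ⟨z, hz⟩ := padic_sq hp2 u hu husq'
      apply husq
      refine ⟨(z : ℚ_[p]), ?_⟩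
      exact_mod_cast congrArg (fun t : ℤ_[p] => (t : ℚ_[p])) hz
    · rw [hv3 h]
      intro hs
      rw [RingHom.map_neg, RingHom.map_one] at hs
      exact (ZMod.exists_sq_eq_neg_one_iff.mp hs) h
  constructor
  · exact part1 hp2 v hv hvns
  · intro Q hQ
    haveI : Invertible (2 : ℚ_[p]) := invertibleOfNonzero (by norm_num)
    obtain ⟨w, hw⟩ := Q.equivalent_weightedSumSquares
    have e : Fin 3 ≃ Fin (Module.finrank ℚ_[p] (Fin 3 → ℚ_[p])) :=
      finCongr (Module.finrank_fin_fun ℚ_[p]).symm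
    have hw2 : Q.Equivalent (QuadraticMap.weightedSumSquares ℚ_[p] (w ∘ e)) :=
      hw.trans (wss_reindex e w)
    set W : Fin 3 → ℚ_[p] := w ∘ e with hWdef
    have hWeq : QuadraticMap.weightedSumSquares ℚ_[p] W = wss3 (W 0) (W 1) (W 2) := by
      apply congrArg (QuadraticMap.weightedSumSquares ℚ_[p])
      funext j
      fin_cases j <;> rfl
    have hw3 : Q.Equivalent (wss3 (W 0) (W 1) (W 2)) := by rw [← hWeq]; exact hw2
    have hanW : (wss3 (W 0) (W 1) (W 2)).Anisotropic := aniso_of_equiv hw3 hQ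
    have hW0 : W 0 ≠ 0 := by
      intro h
      have h0 := hanW ![1, 0, 0] (by rw [wss3_apply]; simp [h])
      exact one_ne_zero (congrFun h0 0)
    have hW1 : W 1 ≠ 0 := by
      intro h
      have h0 := hanW ![0, 1, 0] (by rw [wss3_apply]; simp [h])
      exact one_ne_zero (congrFun h0 1)
    have hW2 : W 2 ≠ 0 := by
      intro h
      have h0 := hanW ![0, 0, 1] (by rw [wss3_apply]; simp [h])
      exact one_ne_zero (congrFun h0 2)
    obtain ⟨k0, s0, hk0, hm0, he0⟩ := sqclass hp2 v hv hvns (W 0) hW0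
    obtain ⟨k1, s1, hk1, hm1, he1⟩ := sqclass hp2 v hv hvns (W 1) hW1
    obtain ⟨k2, s2, hk2, hm2, he2⟩ := sqclass hp2 v hv hvns (W 2) hW2
    have ES : (wss3 (W 0) (W 1) (W 2)).Equivalent (wss3 s0 s1 s2) :=
      wss3_scale hk0 hk1 hk2 he0 he1 he2
    have hQs : Q.Equivalent (wss3 s0 s1 s2) := hw3.trans ES
    have hanS : (wss3 s0 s1 s2).Anisotropic := aniso_of_equiv ES hanW
    obtain ⟨e0, hn0, h0⟩ := class_split v hv s0 hm0
    obtain ⟨e1, hn1, h1⟩ := class_split v hv s1 hm1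
    obtain ⟨e2, hn2, h2⟩ := class_split v hv s2 hm2
    rcases h0 with h0 | h0 <;> rcases h1 with h1 | h1 <;> rcases h2 with h2 | h2 <;>
      rw [h0, h1, h2] at hQs hanS
    · exact absurd hanS
        (unitcon hp2 e0 e1 e2 1 _ _ _ hn0 hn1 hn2 (one_mul _).symm (one_mul _).symm
          (one_mul _).symm)
    · obtain ⟨t, ht, hteq⟩ := core hp2 v hv hvns e0 e1 e2 hn0 hn1 hn2 hanS
      exact ⟨t, ht, hQs.trans hteq⟩
    · have E := wss3_swap12 e0 ((p : ℚ_[p]) * e1) e2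
      obtain ⟨t, ht, hteq⟩ := core hp2 v hv hvns e0 e2 e1 hn0 hn2 hn1
        (aniso_of_equiv E.symm hanS)
      exact ⟨t, ht, hQs.trans (E.symm.trans hteq)⟩
    · have E := wss3_swap12 e0 ((p : ℚ_[p]) * e1) ((p : ℚ_[p]) * e2)
      obtain ⟨t, ht, hteq⟩ := case_two_p hp2 v hv hvns e0 e2 e1 hn0 hn2 hn1
        (aniso_of_equiv E.symm hanS)
      exact ⟨t, ht, hQs.trans (E.symm.trans hteq)⟩
    · have E := wss3_swap02 ((p : ℚ_[p]) * e0) e1 e2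
      obtain ⟨t, ht, hteq⟩ := core hp2 v hv hvns e2 e1 e0 hn2 hn1 hn0
        (aniso_of_equiv E.symm hanS)
      exact ⟨t, ht, hQs.trans (E.symm.trans hteq)⟩
    · have E := wss3_swap01 ((p : ℚ_[p]) * e0) e1 ((p : ℚ_[p]) * e2)
      obtain ⟨t, ht, hteq⟩ := case_two_p hp2 v hv hvns e1 e0 e2 hn1 hn0 hn2
        (aniso_of_equiv E.symm hanS)
      exact ⟨t, ht, hQs.trans (E.symm.trans hteq)⟩
    · have E := wss3_swap02 ((p : ℚ_[p]) * e0) ((p : ℚ_[p]) * e1) e2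
      obtain ⟨t, ht, hteq⟩ := case_two_p hp2 v hv hvns e2 e1 e0 hn2 hn1 hn0
        (aniso_of_equiv E.symm hanS)
      exact ⟨t, ht, hQs.trans (E.symm.trans hteq)⟩
    · exact absurd hanS
        (unitcon hp2 e0 e1 e2 (p : ℚ_[p]) _ _ _ hn0 hn1 hn2 rfl rfl rfl)
end

section
/- Every matrix L ∈ SO(3)_p has all its entries in ℤ_p (i.e. |ℓ_{ij}|_p ≤ 1 for all i, j), and SO(3)_p is a compact subset of the space of 3×3 matrices over ℚ_p with the topology induced by the norm ‖L‖_p = max_{i,j} |ℓ_{ij}|_p. -/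
open scoped Matrix

section Aux

open PadicInt

variable {p : ℕ} [Fact p.Prime]

lemma aux_dvd_iff_toZMod_eq_zero (x : ℤ_[p]) : (p : ℤ_[p]) ∣ x ↔ toZMod x = 0 := by
  rw [← Ideal.mem_span_singleton, ← maximalIdeal_eq_span_p, ← ker_toZMod, RingHom.mem_ker]

lemma aux_toZMod_ne_zero_iff_norm (x : ℤ_[p]) : toZMod x ≠ 0 ↔ ‖x‖ = 1 := by
  rw [Ne, ← RingHom.mem_ker, ker_toZMod, IsLocalRing.mem_maximalIdeal, mem_nonunits,
    not_lt]
  exact ⟨fun h => le_antisymm x.2 h, fun h => h.ge⟩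

lemma aux_nonsquare_of_padic (hp2 : 2 < p) (u : ℤ_[p]) (hu : ‖u‖ = 1)
    (husq : ¬ ∃ y : ℚ_[p], y ^ 2 = (u : ℚ_[p])) : ¬ IsSquare (toZMod u) := by
  rintro ⟨w, hw⟩
  have hu0 : toZMod u ≠ 0 := (aux_toZMod_ne_zero_iff_norm u).mpr hu
  have hw0 : w ≠ 0 := by rintro rfl; simp at hw; exact hu0 hw
  set a : ℤ_[p] := (w.val : ℤ_[p]) with ha
  have hta : toZMod a = w := by
    rw [ha, map_natCast, ZMod.natCast_val, ZMod.cast_id]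
  have hna : ‖a‖ = 1 := (aux_toZMod_ne_zero_iff_norm a).mp (hta ▸ hw0)
  set F : Polynomial ℤ_[p] := Polynomial.X ^ 2 - Polynomial.C u with hF
  have hFa : F.eval a = a ^ 2 - u := by simp [hF]
  have hFd : F.derivative.eval a = 2 * a := by simp [hF]; norm_num
  have h2 : ‖(2 : ℤ_[p])‖ = 1 := by
    rw [← aux_toZMod_ne_zero_iff_norm,
      show (2 : ℤ_[p]) = ((2 : ℕ) : ℤ_[p]) by norm_num, map_natCast, Ne,
      ZMod.natCast_eq_zero_iff]
    intro hdvd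
    have := Nat.le_of_dvd (by norm_num) hdvd
    omega
  have heval_lt : ‖F.eval a‖ < 1 := by
    rw [hFa]
    rcases lt_or_eq_of_le (a ^ 2 - u).2 with h | h
    · exact h
    · exfalso
      apply (aux_toZMod_ne_zero_iff_norm (a ^ 2 - u)).mpr h
      rw [map_sub, map_pow, hta, hw]; ring
  have hderiv : ‖F.derivative.eval a‖ = 1 := by
    rw [hFd, norm_mul, h2, hna, one_mul]
  obtain ⟨z, hz, -⟩ := hensels_lemma (F := F) (a := a) (by simp only [Polynomial.coe_aeval_eq_eval]; rw [hderiv]; simpa using heval_lt)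
  apply husq
  refine ⟨(z : ℚ_[p]), ?_⟩
  have hz2 : z ^ 2 = u := sub_eq_zero.mp (by simpa [hF] using hz)
  exact_mod_cast congrArg (fun t : ℤ_[p] => (t : ℚ_[p])) hz2

lemma aux_nonsquare_v (hp2 : 2 < p) (u : ℤ_[p]) (hu : ‖u‖ = 1)
    (husq : ¬ ∃ y : ℚ_[p], y ^ 2 = (u : ℚ_[p]))
    (v : ℤ_[p]) (hv3 : p % 4 = 3 → v = -1) (hv1 : p % 4 = 1 → v = -u) :
    ¬ IsSquare (toZMod v) := by
  have hodd : p % 2 = 1 := Nat.odd_iff.mp ((Fact.out : p.Prime).odd_of_ne_two (by omega))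
  have h4 : p % 4 = 1 ∨ p % 4 = 3 := by omega
  rcases h4 with h4 | h4
  · rw [hv1 h4]
    rintro ⟨s, hs⟩
    have hm1 : IsSquare (-1 : ZMod p) := ZMod.exists_sq_eq_neg_one_iff.mpr (by omega)
    obtain ⟨t, ht⟩ := hm1
    apply aux_nonsquare_of_padic hp2 u hu husq
    refine ⟨t * s, ?_⟩
    have hmu : toZMod (-u) = s * s := hs
    have : toZMod u = -toZMod (-u) := by rw [map_neg, neg_neg]
    rw [this, hmu, show (-(s*s) : ZMod p) = (-1) * (s * s) by ring, ht]
    ring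
  · rw [hv3 h4]
    rw [map_neg, map_one]
    rw [ZMod.exists_sq_eq_neg_one_iff]
    omega

lemma aux_keyA (v : ℤ_[p]) (hns : ¬ IsSquare (toZMod v))
    (a b c : ℤ_[p]) (h : (p : ℤ_[p]) ^ 2 ∣ a ^ 2 - v * b ^ 2 + p * c ^ 2) :
    (p : ℤ_[p]) ∣ a ∧ (p : ℤ_[p]) ∣ b ∧ (p : ℤ_[p]) ∣ c := by
  have hp1 : (p : ℤ_[p]) ∣ a ^ 2 - v * b ^ 2 + p * c ^ 2 :=
    dvd_trans (dvd_pow_self _ (by norm_num)) h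
  have hzp : toZMod (p : ℤ_[p]) = 0 := by
    rw [map_natCast, ZMod.natCast_self]
  have h0 : toZMod a ^ 2 - toZMod v * toZMod b ^ 2 = 0 := by
    have := (aux_dvd_iff_toZMod_eq_zero _).mp hp1
    rw [map_add, map_sub, map_pow, map_mul, map_pow, map_mul, map_pow, hzp] at this
    simpa using this
  have hb : toZMod b = 0 := by
    by_contra hb
    apply hns
    refine ⟨toZMod a / toZMod b, ?_⟩
    field_simp
    linear_combination -h0
  have ha : toZMod a = 0 := by
    have : toZMod a ^ 2 = 0 := by rw [hb] at h0; simpa using h0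
    exact pow_eq_zero_iff (by norm_num) |>.mp this
  have hda : (p : ℤ_[p]) ∣ a := (aux_dvd_iff_toZMod_eq_zero a).mpr ha
  have hdb : (p : ℤ_[p]) ∣ b := (aux_dvd_iff_toZMod_eq_zero b).mpr hb
  refine ⟨hda, hdb, ?_⟩
  obtain ⟨a1, ha1⟩ := hda
  obtain ⟨b1, hb1⟩ := hdb
  have hpc : (p : ℤ_[p]) ^ 2 ∣ (p : ℤ_[p]) * c ^ 2 := by
    have : (p : ℤ_[p]) * c ^ 2 =
        (a ^ 2 - v * b ^ 2 + p * c ^ 2) - (p : ℤ_[p]) ^ 2 * (a1 ^ 2 - v * b1 ^ 2) := by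
      rw [ha1, hb1]; ring
    rw [this]
    exact dvd_sub h (Dvd.intro _ rfl)
  have hpne : (p : ℤ_[p]) ≠ 0 := by
    exact_mod_cast Nat.cast_ne_zero.mpr (Fact.out : p.Prime).ne_zero
  have hc2 : (p : ℤ_[p]) ∣ c ^ 2 := by
    obtain ⟨t, ht⟩ := hpc
    refine ⟨t, ?_⟩
    apply mul_left_cancel₀ hpne
    rw [ht]; ring
  rw [aux_dvd_iff_toZMod_eq_zero] at hc2 ⊢
  rw [map_pow] at hc2
  exact pow_eq_zero_iff (by norm_num) |>.mp hc2

lemma aux_keyB (v : ℤ_[p]) (hns : ¬ IsSquare (toZMod v))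
    (x : Fin 3 → ℚ_[p])
    (hQ : ‖x 0 ^ 2 - (v : ℚ_[p]) * x 1 ^ 2 + (p : ℚ_[p]) * x 2 ^ 2‖ ≤ 1)
    (i : Fin 3) : ‖x i‖ ≤ 1 := by
  have hp1R : (1 : ℝ) < p := by exact_mod_cast (Fact.out : p.Prime).one_lt
  by_contra hi
  push_neg at hi
  obtain ⟨j, -, hj⟩ := Finset.exists_max_image Finset.univ (fun i => ‖x i‖)
    ⟨i, Finset.mem_univ i⟩
  have hj1 : 1 < ‖x j‖ := lt_of_lt_of_le hi (hj i (Finset.mem_univ i))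
  have hxj0 : x j ≠ 0 := by intro h; rw [h, norm_zero] at hj1; linarith
  have hval : ‖x j‖ = (p : ℝ) ^ (-(x j).valuation) := Padic.norm_eq_zpow_neg_valuation hxj0
  have hvpos : 0 < -(x j).valuation := by
    by_contra h
    push_neg at h
    have := zpow_le_one_of_nonpos₀ hp1R.le h
    rw [← hval] at this
    linarith
  set k : ℕ := (-(x j).valuation).toNat with hkdef
  have hk : (k : ℤ) = -(x j).valuation := Int.toNat_of_nonneg hvpos.le
  have hk1 : 1 ≤ k := by omega
  have hpk : ‖x j‖ = (p : ℝ) ^ k := by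
    rw [hval, ← hk, zpow_natCast]
  have hppos : (0:ℝ) < (p:ℝ) := by linarith
  have hax : ∀ i, ‖(p : ℚ_[p]) ^ k * x i‖ ≤ 1 := by
    intro i
    rw [_root_.norm_mul, _root_.norm_pow, Padic.norm_p]
    calc (p:ℝ)⁻¹ ^ k * ‖x i‖ ≤ (p:ℝ)⁻¹ ^ k * ‖x j‖ := by
          apply mul_le_mul_of_nonneg_left (hj i (Finset.mem_univ i)) (by positivity)
      _ = 1 := by rw [hpk, inv_pow, inv_mul_cancel₀ (by positivity)]
  set y : Fin 3 → ℤ_[p] := fun i => ⟨(p : ℚ_[p]) ^ k * x i, hax i⟩ with hy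
  have hyc : ∀ i, (y i : ℚ_[p]) = (p : ℚ_[p]) ^ k * x i := fun i => rfl
  set E : ℤ_[p] := y 0 ^ 2 - v * y 1 ^ 2 + p * y 2 ^ 2 with hE
  have hEc : (E : ℚ_[p]) =
      (p : ℚ_[p]) ^ (2 * k) * (x 0 ^ 2 - (v : ℚ_[p]) * x 1 ^ 2 + (p : ℚ_[p]) * x 2 ^ 2) := by
    rw [hE]
    push_cast [hyc]
    ring
  have hEnorm : ‖E‖ ≤ (p : ℝ) ^ (-(2:ℕ) : ℤ) := by
    rw [← PadicInt.padic_norm_e_of_padicInt, hEc, _root_.norm_mul, _root_.norm_pow,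
      Padic.norm_p]
    calc (p:ℝ)⁻¹ ^ (2*k) * ‖x 0 ^ 2 - (v : ℚ_[p]) * x 1 ^ 2 + (p : ℚ_[p]) * x 2 ^ 2‖
        ≤ (p:ℝ)⁻¹ ^ (2*k) * 1 := by
          apply mul_le_mul_of_nonneg_left hQ (by positivity)
      _ = (p:ℝ) ^ (-(2*k:ℕ) : ℤ) := by
          rw [mul_one, inv_pow, ← zpow_natCast, ← zpow_neg]
      _ ≤ (p:ℝ) ^ (-(2:ℕ) : ℤ) := by
          apply zpow_le_zpow_right₀ hp1R.le
          omega
  have hdvd : (p : ℤ_[p]) ^ 2 ∣ E :=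
    Ideal.mem_span_singleton.mp ((PadicInt.norm_le_pow_iff_mem_span_pow E 2).mp hEnorm)
  obtain ⟨h0, h1, h2⟩ := aux_keyA v hns (y 0) (y 1) (y 2) (by rw [← hE]; exact hdvd)
  have hyj : (p : ℤ_[p]) ∣ y j := by fin_cases j <;> assumption
  have hyj1 : ‖y j‖ = 1 := by
    rw [← PadicInt.padic_norm_e_of_padicInt, hyc, _root_.norm_mul, _root_.norm_pow,
      Padic.norm_p, hpk, inv_pow, inv_mul_cancel₀ (by positivity)]
  exact ((aux_toZMod_ne_zero_iff_norm (y j)).mpr hyj1)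
    ((aux_dvd_iff_toZMod_eq_zero (y j)).mp hyj)

end Aux

/-- The compact special orthogonal group `SO(3)_p`, as the set of `3 × 3` matrices over
`ℚ_p` preserving the quadratic form with matrix `A₊ = diag(1, -v, p)` and of determinant 1. -/
def SO3set (p : ℕ) [Fact p.Prime] (v : ℤ_[p]) : Set (Matrix (Fin 3) (Fin 3) ℚ_[p]) :=
  {L | L.transpose * Matrix.diagonal ![(1 : ℚ_[p]), -(v : ℚ_[p]), (p : ℚ_[p])] * L =
        Matrix.diagonal ![(1 : ℚ_[p]), -(v : ℚ_[p]), (p : ℚ_[p])] ∧ L.det = 1}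

theorem stmt2 (p : ℕ) [Fact p.Prime] (hp2 : 2 < p)
    (u : ℤ_[p]) (hu : ‖u‖ = 1) (husq : ¬ ∃ y : ℚ_[p], y ^ 2 = (u : ℚ_[p]))
    (v : ℤ_[p]) (hv3 : p % 4 = 3 → v = -1) (hv1 : p % 4 = 1 → v = -u) :
    (∀ L ∈ SO3set p v, ∀ i j, ‖L i j‖ ≤ 1) ∧ IsCompact (SO3set p v) := by
  have hns : ¬ IsSquare (PadicInt.toZMod v) := aux_nonsquare_v hp2 u hu husq v hv3 hv1
  set D : Matrix (Fin 3) (Fin 3) ℚ_[p] :=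
    Matrix.diagonal ![(1 : ℚ_[p]), -(v : ℚ_[p]), (p : ℚ_[p])] with hD
  have hbdd : ∀ L ∈ SO3set p v, ∀ i j, ‖L i j‖ ≤ 1 := by
    intro L hL i j
    have hjj := congrFun (congrFun hL.1 j) j
    have hQ : (L 0 j) ^ 2 - (v : ℚ_[p]) * (L 1 j) ^ 2 + (p : ℚ_[p]) * (L 2 j) ^ 2 =
        Matrix.diagonal ![(1 : ℚ_[p]), -(v : ℚ_[p]), (p : ℚ_[p])] j j := by
      rw [← hjj]
      simp [hD, Matrix.mul_apply, Matrix.diagonal_apply, Fin.sum_univ_three]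
      ring
    have hnorm : ‖(L 0 j) ^ 2 - (v : ℚ_[p]) * (L 1 j) ^ 2 + (p : ℚ_[p]) * (L 2 j) ^ 2‖ ≤ 1 := by
      rw [hQ]
      fin_cases j <;>
        simp [Matrix.diagonal_apply, PadicInt.padic_norm_e_of_padicInt, Padic.norm_p]
      · exact PadicInt.norm_le_one v
      · rw [inv_le_one₀] <;> exact_mod_cast (Fact.out : p.Prime).one_lt.le
    exact aux_keyB v hns (fun i => L i j) hnorm i
  refine ⟨hbdd, ?_⟩
  have hK : IsCompact {L : Matrix (Fin 3) (Fin 3) ℚ_[p] | ∀ i j, ‖L i j‖ ≤ 1} := by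
    have heq : {L : Matrix (Fin 3) (Fin 3) ℚ_[p] | ∀ i j, ‖L i j‖ ≤ 1} =
        Set.pi Set.univ (fun _ : Fin 3 =>
          Set.pi Set.univ (fun _ : Fin 3 => Metric.closedBall (0 : ℚ_[p]) 1)) := by
      ext L
      constructor
      · intro h
        refine Set.mem_univ_pi.mpr fun i => Set.mem_univ_pi.mpr fun j => ?_
        simpa [dist_zero_right] using h i j
      · intro h i j
        have := Set.mem_univ_pi.mp (Set.mem_univ_pi.mp h i) j
        simpa [dist_zero_right] using this
    rw [heq]
    exact isCompact_univ_pi fun i => isCompact_univ_pi fun j => isCompact_closedBall 0 1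
  have hclosed : IsClosed (SO3set p v) := by
    have hcont : Continuous fun L : Matrix (Fin 3) (Fin 3) ℚ_[p] => L.transpose * D * L :=
      (continuous_id.matrix_transpose.matrix_mul continuous_const).matrix_mul continuous_id
    have hdet : Continuous fun L : Matrix (Fin 3) (Fin 3) ℚ_[p] => L.det :=
      continuous_id.matrix_det
    have : SO3set p v =
        ((fun L : Matrix (Fin 3) (Fin 3) ℚ_[p] => L.transpose * D * L) ⁻¹' {D}) ∩
        (Matrix.det ⁻¹' {1}) := by
      ext L
      simp [SO3set, hD, Set.mem_inter_iff]
    rw [this]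
    exact ((isClosed_singleton.preimage hcont).inter (isClosed_singleton.preimage hdet))
  exact hK.of_isClosed_subset hclosed fun L hL => hbdd L hL
end

section
/- For every κ ∈ {-v, p, up}, every matrix L ∈ SO(2)_{p,κ} has all its entries in ℤ_p (i.e. |ℓ_{ij}|_p ≤ 1 for all i, j), and SO(2)_{p,κ} is a compact subset of the space of 2×2 matrices over ℚ_p with the topology induced by the norm ‖L‖_p = max_{i,j} |ℓ_{ij}|_p. -/
open scoped Matrix

/-- The special orthogonal group of the binary quadratic form with matrix
`diag(a, b)` over `ℚ_p`. -/
def SO2set (p : ℕ) [Fact p.Prime] (a b : ℚ_[p]) : Set (Matrix (Fin 2) (Fin 2) ℚ_[p]) :=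
  {L | L.transpose * Matrix.diagonal ![a, b] * L = Matrix.diagonal ![a, b] ∧ L.det = 1}

section aux

variable {p : ℕ} [Fact p.Prime]

lemma aux_val_of_norm_one {x : ℚ_[p]} (hx : ‖x‖ = 1) : x.valuation = 0 := by
  have hx0 : x ≠ 0 := by rintro rfl; simp at hx
  have hp1 : (1 : ℝ) < p := by exact_mod_cast (Fact.out : p.Prime).one_lt
  have h := Padic.norm_eq_zpow_neg_valuation hx0
  rw [hx] at h
  have h0 : (p : ℝ) ^ (0 : ℤ) = (p : ℝ) ^ (-x.valuation) := by
    rw [zpow_zero]; exact h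
  have := zpow_right_injective₀ (by linarith : (0:ℝ) < p) (by linarith) h0
  omega

lemma aux_norm_ne_of_val_ne {x y : ℚ_[p]} (hx : x ≠ 0) (hy : y ≠ 0)
    (h : x.valuation ≠ y.valuation) : ‖x‖ ≠ ‖y‖ := by
  have hp1 : (1 : ℝ) < p := by exact_mod_cast (Fact.out : p.Prime).one_lt
  rw [Padic.norm_eq_zpow_neg_valuation hx, Padic.norm_eq_zpow_neg_valuation hy]
  intro hc
  exact h (by have := zpow_right_injective₀ (by linarith : (0:ℝ) < p) (by linarith) hc; omega)

/-- Hensel: anything close to 1 is a square in `ℚ_[p]`, for odd `p`. -/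
lemma aux_sq_of_close_one (hp2 : 2 < p) {w : ℚ_[p]} (hw : ‖w - 1‖ < 1) :
    ∃ z : ℚ_[p], z ^ 2 = w := by
  have hwle : ‖w‖ ≤ 1 := by
    calc ‖w‖ = ‖(w - 1) + 1‖ := by ring_nf
    _ ≤ max ‖w - 1‖ ‖(1 : ℚ_[p])‖ := Padic.nonarchimedean _ _
    _ ≤ 1 := by rw [norm_one]; exact max_le hw.le le_rfl
  set w' : ℤ_[p] := ⟨w, hwle⟩ with hw'
  have h2 : ‖(2 : ℤ_[p])‖ = 1 := by
    rw [show ((2:ℤ_[p])) = ((2:ℤ) : ℤ_[p]) by norm_num,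
      PadicInt.norm_intCast_eq_padic_norm]
    have hnd : ¬ ((p:ℤ) ∣ 2) := fun hdvd => by
      have := Int.le_of_dvd (by norm_num) hdvd; omega
    have h1 := (Padic.norm_intCast_lt_one_iff (k := (2:ℤ)) (p := p)).not.mpr hnd
    have hle := Padic.norm_int_le_one (2:ℤ) (p := p)
    push_neg at h1
    linarith
  have key : ‖Polynomial.eval 1 (Polynomial.X ^ 2 - Polynomial.C w')‖ <
      ‖Polynomial.eval 1 (Polynomial.derivative (Polynomial.X ^ 2 - Polynomial.C w'))‖ ^ 2 := by
    have hd : Polynomial.derivative (Polynomial.X ^ 2 - Polynomial.C w' :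
        Polynomial ℤ_[p]) = Polynomial.C 2 * Polynomial.X := by
      simp [Polynomial.derivative_X_pow]
      rw [← Polynomial.C_1, ← Polynomial.C_add]; norm_num
    rw [hd]
    simp only [Polynomial.eval_mul, Polynomial.eval_C, Polynomial.eval_X, mul_one,
      Polynomial.eval_sub, Polynomial.eval_pow, one_pow]
    rw [h2, one_pow]
    have : ‖(1 - w' : ℤ_[p])‖ = ‖w - 1‖ := by
      rw [← norm_neg]
      have h3 : (-(1 - w') : ℤ_[p]) = w' - 1 := by ring
      rw [h3, PadicInt.norm_def]
      push_cast
      rfl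
    rw [this]
    exact hw
  obtain ⟨z, hz, -⟩ := hensels_lemma key
  refine ⟨(z : ℚ_[p]), ?_⟩
  have hzz : z ^ 2 = w' := by
    simpa [sub_eq_zero] using hz
  have := congrArg (PadicInt.Coe.ringHom (p := p)) hzz
  push_cast at this
  exact this

lemma aux_sqrt_neg_one (hp2 : 2 < p) (h1 : p % 4 = 1) : ∃ r : ℚ_[p], r ^ 2 = -1 := by
  have hsq : IsSquare (-1 : ZMod p) := ZMod.exists_sq_eq_neg_one_iff.2 (by omega)
  obtain ⟨x, hx⟩ := hsq
  set n : ℕ := x.val with hn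
  have hcast : ((n : ℤ) : ZMod p) = x := by
    push_cast
    rw [hn, ZMod.natCast_val, ZMod.cast_id]
  have hdvd : (p : ℤ) ∣ ((n : ℤ) ^ 2 + 1) := by
    have : (((n : ℤ) ^ 2 + 1 : ℤ) : ZMod p) = 0 := by
      push_cast [hcast]
      rw [show ((x : ZMod p) ^ 2) = x * x by ring, ← hx]
      ring
    exact (ZMod.intCast_zmod_eq_zero_iff_dvd _ _).1 this
  have hnormlt : ‖((n : ℚ_[p]) ^ 2 + 1)‖ < 1 := by
    have := (Padic.norm_intCast_lt_one_iff (k := (n : ℤ) ^ 2 + 1) (p := p)).2 hdvd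
    push_cast at this
    exact this
  have hnn : (n : ℚ_[p]) ≠ 0 := by
    intro h0
    rw [h0] at hnormlt
    simp at hnormlt
  have hnorm1 : ‖(n : ℚ_[p])‖ = 1 := by
    have hle : ‖(n : ℚ_[p])‖ ≤ 1 := by
      have := Padic.norm_int_le_one (n : ℤ) (p := p)
      push_cast at this
      exact this
    rcases lt_or_eq_of_le hle with hlt | heq
    · exfalso
      have hsq2 : ‖(n : ℚ_[p]) ^ 2‖ < 1 := by
        rw [norm_pow]
        nlinarith [norm_nonneg (n : ℚ_[p])]
      have : ‖(n : ℚ_[p]) ^ 2 + 1‖ = 1 := by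
        rw [Padic.add_eq_max_of_ne (by rw [norm_one]; exact ne_of_lt hsq2)]
        rw [norm_one]
        exact max_eq_right hsq2.le
      linarith
    · exact heq
  have hw : ‖(-1 / (n : ℚ_[p]) ^ 2) - 1‖ < 1 := by
    have heq : (-1 / (n : ℚ_[p]) ^ 2) - 1 = -(((n : ℚ_[p]) ^ 2 + 1) / (n : ℚ_[p]) ^ 2) := by
      field_simp
      ring
    rw [heq, norm_neg, norm_div, norm_pow, hnorm1]
    simpa using hnormlt
  obtain ⟨z, hz⟩ := aux_sq_of_close_one hp2 hw
  refine ⟨z * (n : ℚ_[p]), ?_⟩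
  rw [mul_pow, hz]
  field_simp

/-- bound in the unit discriminant case. -/
lemma aux_bound_unit (hp2 : 2 < p) {b α γ : ℚ_[p]} (hb : ‖b‖ = 1)
    (hns : ∀ s : ℚ_[p], s ^ 2 ≠ -b) (h : α ^ 2 + b * γ ^ 2 = 1) :
    ‖α‖ ≤ 1 ∧ ‖γ‖ ≤ 1 := by
  have hb0 : b ≠ 0 := by intro h0; rw [h0] at hb; simp at hb
  have hγle : ‖γ‖ ≤ 1 := by
    by_contra hγ
    push_neg at hγ
    have hγ0 : γ ≠ 0 := fun h0 => by rw [h0, norm_zero] at hγ; linarith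
    have hαγ : ‖α‖ = ‖γ‖ := by
      by_contra hne
      have hne2 : ‖α ^ 2‖ ≠ ‖b * γ ^ 2‖ := by
        rw [norm_pow, norm_mul, norm_pow, hb, one_mul]
        exact fun hc => hne ((pow_left_inj₀ (norm_nonneg α) (norm_nonneg γ) two_ne_zero).1 hc)
      have hmax : ‖α ^ 2 + b * γ ^ 2‖ = max ‖α ^ 2‖ ‖b * γ ^ 2‖ :=
        Padic.add_eq_max_of_ne hne2
      rw [h, norm_one] at hmax
      have h2 : ‖b * γ ^ 2‖ ≤ 1 := hmax ▸ le_max_right _ _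
      rw [norm_mul, norm_pow, hb, one_mul] at h2
      nlinarith
    have hα0 : α ≠ 0 := fun h0 => by
      rw [h0, norm_zero] at hαγ
      rw [← hαγ] at hγ
      linarith
    have hbγ : b * γ ^ 2 ≠ 0 := mul_ne_zero hb0 (pow_ne_zero _ hγ0)
    have hw : ‖(1 - 1 / (b * γ ^ 2)) - 1‖ < 1 := by
      have heq : (1 - 1 / (b * γ ^ 2)) - 1 = -(1 / (b * γ ^ 2)) := by ring
      rw [heq, norm_neg, norm_div, norm_one, norm_mul, norm_pow, hb, one_mul,
        div_lt_one (by positivity)]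
      nlinarith
    obtain ⟨z, hz⟩ := aux_sq_of_close_one hp2 hw
    have hz0 : z ≠ 0 := by
      intro h0
      rw [h0] at hz
      have : (1 : ℚ_[p]) - 1 / (b * γ ^ 2) = 0 := by
        rw [← hz]; ring
      rw [this] at hw
      simp at hw
    refine hns ((α / γ) / z) ?_
    have hα2 : α ^ 2 = 1 - b * γ ^ 2 := by linear_combination h
    have hrw : (1 : ℚ_[p]) - 1 / (b * γ ^ 2) = -α ^ 2 / (b * γ ^ 2) := by
      field_simp
      linear_combination hα2
    rw [div_pow, div_pow, hz, hrw]
    field_simp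
  refine ⟨?_, hγle⟩
  have hsum : α ^ 2 = 1 + (-(b * γ ^ 2)) := by linear_combination h
  have hle : ‖α‖ ^ 2 ≤ 1 := by
    rw [← norm_pow, hsum]
    calc ‖(1 : ℚ_[p]) + -(b * γ ^ 2)‖ ≤ max ‖(1:ℚ_[p])‖ ‖-(b * γ ^ 2)‖ :=
      Padic.nonarchimedean _ _
    _ ≤ 1 := by
      rw [norm_one, norm_neg, norm_mul, norm_pow, hb, one_mul]
      refine max_le le_rfl ?_
      nlinarith [norm_nonneg γ]
  nlinarith [norm_nonneg α]

/-- bound in the `b = p` case. -/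
lemma aux_bound_p {a α γ : ℚ_[p]} (ha : ‖a‖ = 1)
    (h : a * α ^ 2 + (p : ℚ_[p]) * γ ^ 2 = a) : ‖α‖ ≤ 1 ∧ ‖γ‖ ≤ 1 := by
  have hp1 : (1 : ℝ) < p := by exact_mod_cast (Fact.out : p.Prime).one_lt
  have ha0 : a ≠ 0 := by intro h0; rw [h0] at ha; simp at ha
  have hpnorm : ‖(p : ℚ_[p])‖ = (p : ℝ)⁻¹ := Padic.norm_p
  have hpne : (p : ℚ_[p]) ≠ 0 := by
    intro h0
    rw [h0, norm_zero] at hpnorm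
    have : (0:ℝ) < (p:ℝ)⁻¹ := by positivity
    linarith
  by_cases hγ0 : γ = 0
  · subst hγ0
    have hα2 : α ^ 2 = 1 := by
      have h' : a * α ^ 2 = a * 1 := by linear_combination h
      exact mul_left_cancel₀ ha0 h'
    have : ‖α‖ ^ 2 = 1 := by
      rw [← norm_pow, hα2, norm_one]
    constructor
    · nlinarith [norm_nonneg α]
    · simp
  · have hγv : ((p : ℚ_[p]) * γ ^ 2).valuation = 1 + 2 * γ.valuation := by
      rw [Padic.valuation_mul hpne (pow_ne_zero _ hγ0), Padic.valuation_p]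
      congr 1
      rw [sq, Padic.valuation_mul hγ0 hγ0]
      ring
    by_cases hα0 : α = 0
    · exfalso
      subst hα0
      have hpγ : (p : ℚ_[p]) * 0 ^ 2 = a → False := by intro; simp_all
      have h' : (p : ℚ_[p]) * γ ^ 2 = a := by linear_combination h
      have := hγv
      rw [h', aux_val_of_norm_one ha] at this
      omega
    · have hαv : (a * α ^ 2).valuation = 2 * α.valuation := by
        rw [Padic.valuation_mul ha0 (pow_ne_zero _ hα0), aux_val_of_norm_one ha]
        rw [sq, Padic.valuation_mul hα0 hα0]
        ring
      have hne : ‖a * α ^ 2‖ ≠ ‖(p : ℚ_[p]) * γ ^ 2‖ :=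
        aux_norm_ne_of_val_ne (mul_ne_zero ha0 (pow_ne_zero _ hα0))
          (mul_ne_zero hpne (pow_ne_zero _ hγ0)) (by rw [hαv, hγv]; omega)
      have hmax := Padic.add_eq_max_of_ne hne
      rw [h, ha] at hmax
      constructor
      · have h1 : ‖a * α ^ 2‖ ≤ 1 := hmax ▸ le_max_left _ _
        rw [norm_mul, norm_pow, ha, one_mul] at h1
        nlinarith [norm_nonneg α]
      · have h2 : ‖(p : ℚ_[p]) * γ ^ 2‖ ≤ 1 := hmax ▸ le_max_right _ _
        have hv2 := (Padic.norm_le_one_iff_val_nonneg _).1 h2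
        rw [hγv] at hv2
        have : 0 ≤ γ.valuation := by omega
        exact (Padic.norm_le_one_iff_val_nonneg _).2 this

/-- Entry bounds + compactness, given a bound criterion for the first column. -/
lemma aux_main (a b : ℚ_[p]) (ha0 : a ≠ 0) (hb0 : b ≠ 0)
    (key : ∀ α γ : ℚ_[p], a * α ^ 2 + b * γ ^ 2 = a →
      ‖α‖ ≤ 1 ∧ ‖γ‖ ≤ 1 ∧ ‖b * γ / a‖ ≤ 1) :
    (∀ L ∈ SO2set p a b, ∀ i j, ‖L i j‖ ≤ 1) ∧ IsCompact (SO2set p a b) := by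
  have hbound : ∀ L ∈ SO2set p a b, ∀ i j, ‖L i j‖ ≤ 1 := by
    rintro L ⟨h1, h2⟩ i j
    rw [← Matrix.ext_iff] at h1
    have e00 := h1 0 0
    have e01 := h1 0 1
    simp [Matrix.mul_apply, Fin.sum_univ_two, Matrix.transpose_apply,
      Matrix.diagonal_apply] at e00 e01
    rw [Matrix.det_fin_two] at h2
    have h00 : a * (L 0 0) ^ 2 + b * (L 1 0) ^ 2 = a := by linear_combination e00
    have h01 : a * (L 0 0 * L 0 1) + b * (L 1 0 * L 1 1) = 0 := by linear_combination e01
    have hδ : L 1 1 = L 0 0 := by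
      have hcancel : a * L 1 1 = a * L 0 0 := by
        linear_combination -(L 1 1) * h00 + (L 1 0) * h01 + (a * L 0 0) * h2
      exact mul_left_cancel₀ ha0 hcancel
    have hβ : L 0 1 = -(b * L 1 0 / a) := by
      have hcancel : a * L 0 1 = -(b * L 1 0) := by
        linear_combination -(L 0 1) * h00 + (L 0 0) * h01 - (b * L 1 0) * h2
      field_simp
      linear_combination hcancel
    obtain ⟨hα, hγ, hβn⟩ := key (L 0 0) (L 1 0) h00
    fin_cases i <;> fin_cases j
    · exact hα
    · show ‖L 0 1‖ ≤ 1
      rw [hβ, norm_neg]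
      exact hβn
    · exact hγ
    · show ‖L 1 1‖ ≤ 1
      rw [hδ]; exact hα
  refine ⟨hbound, ?_⟩
  have hclosed : IsClosed (SO2set p a b) := by
    have hc1 : IsClosed {L : Matrix (Fin 2) (Fin 2) ℚ_[p] |
        L.transpose * Matrix.diagonal ![a, b] * L = Matrix.diagonal ![a, b]} := by
      have hcont : Continuous fun L : Matrix (Fin 2) (Fin 2) ℚ_[p] =>
          L.transpose * Matrix.diagonal ![a, b] * L :=
        ((continuous_id.matrix_transpose.matrix_mul continuous_const).matrix_mul continuous_id)
      exact isClosed_eq hcont continuous_const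
    have hc2 : IsClosed {L : Matrix (Fin 2) (Fin 2) ℚ_[p] | L.det = 1} :=
      isClosed_eq continuous_id.matrix_det continuous_const
    exact hc1.inter hc2
  have hcompact : IsCompact {L : Matrix (Fin 2) (Fin 2) ℚ_[p] | ∀ i j, ‖L i j‖ ≤ 1} := by
    have : {L : Matrix (Fin 2) (Fin 2) ℚ_[p] | ∀ i j, ‖L i j‖ ≤ 1} =
        Set.pi Set.univ (fun _ : Fin 2 => Set.pi Set.univ
          (fun _ : Fin 2 => Metric.closedBall (0 : ℚ_[p]) 1)) := by
      ext L
      constructor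
      · intro hL i _ j _
        simpa [dist_zero_right] using hL i j
      · intro hL i j
        simpa [dist_zero_right] using hL i (Set.mem_univ i) j (Set.mem_univ j)
    rw [this]
    exact isCompact_univ_pi fun i => isCompact_univ_pi fun j =>
      ProperSpace.isCompact_closedBall 0 1
  exact hcompact.of_isClosed_subset hclosed (fun L hL => hbound L hL)

end aux


lemma aux_no_sqrt_neg_one {p : ℕ} [Fact p.Prime] (h3 : p % 4 = 3) :
    ∀ s : ℚ_[p], s ^ 2 ≠ -1 := by
  intro s hs
  have hsle : ‖s‖ ≤ 1 := by
    have h1 : ‖s‖ ^ 2 = 1 := by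
      rw [← norm_pow, hs]
      simp
    nlinarith [norm_nonneg s]
  set m : ℤ_[p] := ⟨s, hsle⟩ with hm
  have hm2 : m ^ 2 = -1 := by
    apply Subtype.coe_injective
    push_cast
    exact hs
  have : IsSquare (-1 : ZMod p) := by
    refine ⟨PadicInt.toZMod m, ?_⟩
    have := congrArg (PadicInt.toZMod (p := p)) hm2
    rw [map_pow, map_neg, map_one] at this
    rw [← this]
    ring
  rw [ZMod.exists_sq_eq_neg_one_iff] at this
  exact this h3

theorem stmt3 (p : ℕ) [Fact p.Prime] (hp2 : 2 < p)
    (u : ℤ_[p]) (hu : ‖u‖ = 1) (husq : ¬ ∃ y : ℚ_[p], y ^ 2 = (u : ℚ_[p]))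
    (v : ℤ_[p]) (hv3 : p % 4 = 3 → v = -1) (hv1 : p % 4 = 1 → v = -u) :
    ∀ a b : ℚ_[p],
      ((a, b) ∈ ({((1 : ℚ_[p]), -(v : ℚ_[p])), ((1 : ℚ_[p]), (p : ℚ_[p])),
          ((u : ℚ_[p]), (p : ℚ_[p]))} : Set (ℚ_[p] × ℚ_[p]))) →
      (∀ L ∈ SO2set p a b, ∀ i j, ‖L i j‖ ≤ 1) ∧ IsCompact (SO2set p a b) := by
  intro a b hab
  have hp1 : (1 : ℝ) < p := by exact_mod_cast (Fact.out : p.Prime).one_lt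
  have hpmod : p % 4 = 1 ∨ p % 4 = 3 := by
    have h2 : p % 2 = 1 := Nat.odd_iff.1 ((Fact.out : p.Prime).odd_of_ne_two (by omega))
    omega
  have hunorm : ‖(u : ℚ_[p])‖ = 1 := by
    rw [PadicInt.padic_norm_e_of_padicInt]
    exact hu
  have hu0 : (u : ℚ_[p]) ≠ 0 := by
    intro h0
    rw [h0, norm_zero] at hunorm
    norm_num at hunorm
  have hpnorm : ‖(p : ℚ_[p])‖ = (p : ℝ)⁻¹ := Padic.norm_p
  have hpne : (p : ℚ_[p]) ≠ 0 := by
    intro h0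
    rw [h0, norm_zero] at hpnorm
    have : (0 : ℝ) < (p : ℝ)⁻¹ := by positivity
    linarith
  have hpkey : ∀ c : ℚ_[p], ‖c‖ = 1 → ∀ α γ : ℚ_[p],
      c * α ^ 2 + (p : ℚ_[p]) * γ ^ 2 = c →
      ‖α‖ ≤ 1 ∧ ‖γ‖ ≤ 1 ∧ ‖(p : ℚ_[p]) * γ / c‖ ≤ 1 := by
    intro c hc α γ hk
    obtain ⟨h1, h2⟩ := aux_bound_p hc hk
    refine ⟨h1, h2, ?_⟩
    rw [norm_div, norm_mul, hc, div_one, hpnorm]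
    have hple : (p : ℝ)⁻¹ ≤ 1 := by
      rw [inv_le_one_iff₀]
      right
      linarith
    calc (p : ℝ)⁻¹ * ‖γ‖ ≤ 1 * 1 := mul_le_mul hple h2 (norm_nonneg _) zero_le_one
    _ = 1 := by norm_num
  simp only [Set.mem_insert_iff, Set.mem_singleton_iff, Prod.mk.injEq] at hab
  rcases hab with ⟨ha, hb⟩ | ⟨ha, hb⟩ | ⟨ha, hb⟩ <;> subst ha <;> subst hb
  · -- (1, -v)
    have hvnorm : ‖(v : ℚ_[p])‖ = 1 := by
      rcases hpmod with h1 | h3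
      · rw [hv1 h1]
        push_cast
        rw [norm_neg]
        exact hunorm
      · rw [hv3 h3]
        push_cast
        simp
    have hv0 : (v : ℚ_[p]) ≠ 0 := by
      intro h0
      rw [h0, norm_zero] at hvnorm
      norm_num at hvnorm
    have hns : ∀ s : ℚ_[p], s ^ 2 ≠ -(-(v : ℚ_[p])) := by
      rcases hpmod with h1 | h3
      · rw [hv1 h1]
        intro s hs
        push_cast at hs
        rw [neg_neg] at hs
        obtain ⟨r, hr⟩ := aux_sqrt_neg_one hp2 h1
        have hr0 : r ≠ 0 := by
          intro h0
          rw [h0] at hr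
          norm_num at hr
        apply husq
        refine ⟨s / r, ?_⟩
        rw [div_pow, hs, hr]
        field_simp
      · rw [hv3 h3]
        intro s hs
        push_cast at hs
        rw [neg_neg] at hs
        exact aux_no_sqrt_neg_one h3 s hs
    apply aux_main (1 : ℚ_[p]) (-(v : ℚ_[p])) one_ne_zero (neg_ne_zero.2 hv0)
    intro α γ hk
    have hk' : α ^ 2 + (-(v : ℚ_[p])) * γ ^ 2 = 1 := by linear_combination hk
    obtain ⟨h1, h2⟩ := aux_bound_unit hp2 (by rw [norm_neg]; exact hvnorm) hns hk'
    refine ⟨h1, h2, ?_⟩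
    rw [div_one, norm_mul, norm_neg, hvnorm, one_mul]
    exact h2
  · -- (1, p)
    apply aux_main (1 : ℚ_[p]) (p : ℚ_[p]) one_ne_zero hpne
    intro α γ hk
    exact hpkey 1 norm_one α γ (by linear_combination hk)
  · -- (u, p)
    apply aux_main (u : ℚ_[p]) (p : ℚ_[p]) hu0 hpne
    intro α γ hk
    exact hpkey (u : ℚ_[p]) hunorm α γ hk
end

section
/- For κ ∈ {-v, p, up} and n ∈ ℕ, n ≥ 1, let G̃_{κ,p^n} = {L̃ ∈ M₂(ℤ/p^nℤ) : L̃ᵀ·Ā_κ·L̃ = Ā_κ and det L̃ = 1}, where Ā_κ is the entrywise reduction of A_κ modulo p^n. Then for every L̃ ∈ G̃_{κ,p^n}, the set of matrices M ∈ G̃_{κ,p^{n+1}} whose entrywise reduction modulo p^n (via the ring homomorphism ℤ/p^{n+1}ℤ → ℤ/p^nℤ) equals L̃ has exactly p elements; in particular every solution modulo p^n of the defining special orthogonal conditions lifts to a solution modulo p^{n+1}. -/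
open scoped Matrix

/-- Reduction of a `p`-adic number in `ℤ_p` modulo `p^n` (junk value `0` outside `ℤ_p`). -/
noncomputable def redQ (p : ℕ) [Fact p.Prime] (n : ℕ) (x : ℚ_[p]) : ZMod (p ^ n) :=
  if h : ‖x‖ ≤ 1 then PadicInt.toZModPow n (⟨x, h⟩ : ℤ_[p]) else 0

/-- Entrywise reduction modulo `p^n` of a square matrix over `ℚ_p` with entries in `ℤ_p`. -/
noncomputable def matRed (p : ℕ) [Fact p.Prime] (n d : ℕ)
    (L : Matrix (Fin d) (Fin d) ℚ_[p]) : Matrix (Fin d) (Fin d) (ZMod (p ^ n)) :=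
  L.map (redQ p n)

/-- The group of solutions modulo `p^n` of the special orthogonal conditions associated
with the matrix `A` (with entries in `ℤ_p`). -/
noncomputable def SOmod (p : ℕ) [Fact p.Prime] (n d : ℕ)
    (A : Matrix (Fin d) (Fin d) ℚ_[p]) : Set (Matrix (Fin d) (Fin d) (ZMod (p ^ n))) :=
  {L | L.transpose * matRed p n d A * L = matRed p n d A ∧ L.det = 1}

private lemma matdiag_eq {S : Type*} [CommRing S] (A B : S) (L : Matrix (Fin 2) (Fin 2) S) :
    (L.transpose * Matrix.diagonal ![A, B] * L = Matrix.diagonal ![A, B]) ↔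
      (A * L 0 0 ^ 2 + B * L 1 0 ^ 2 = A ∧
       A * L 0 0 * L 0 1 + B * L 1 0 * L 1 1 = 0 ∧
       A * L 0 1 ^ 2 + B * L 1 1 ^ 2 = B) := by
  rw [← Matrix.ext_iff]
  constructor
  · intro h
    have h00 := h 0 0; have h01 := h 0 1; have h11 := h 1 1
    simp [Matrix.mul_apply, Fin.sum_univ_two, Matrix.diagonal] at h00 h01 h11
    exact ⟨by linear_combination h00, by linear_combination h01, by linear_combination h11⟩
  · rintro ⟨h1, h2, h3⟩ i j
    fin_cases i <;> fin_cases j <;>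
      simp [Matrix.mul_apply, Fin.sum_univ_two, Matrix.diagonal] <;> first
      | linear_combination h1
      | linear_combination h2
      | linear_combination h3

private lemma charSO {S : Type*} [CommRing S] (A B : S) (hA : IsUnit A)
    (L : Matrix (Fin 2) (Fin 2) S) :
    (L.transpose * Matrix.diagonal ![A, B] * L = Matrix.diagonal ![A, B] ∧ L.det = 1) ↔
      (L 1 1 = L 0 0 ∧ A * L 0 1 + B * L 1 0 = 0 ∧
        A * L 0 0 ^ 2 + B * L 1 0 ^ 2 = A) := by
  rw [matdiag_eq, Matrix.det_fin_two]
  set x := L 0 0; set y := L 0 1; set z := L 1 0; set w := L 1 1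
  constructor
  · rintro ⟨⟨h1, h2, h3⟩, h4⟩
    have hw : A * w = A * x := by linear_combination (A*x)*h4 + z*h2 - w*h1
    have hy : A * y + B * z = 0 := by
      linear_combination (-(A*y+B*z) + B*z)*h4 + w*h2 - z*h3
    exact ⟨hA.mul_left_cancel hw, hy, h1⟩
  · rintro ⟨hw, hy, h1⟩
    have h4 : x * w - y * z = 1 := by
      refine hA.mul_left_cancel ?_
      rw [mul_one]
      linear_combination A*x*hw + h1 - z*hy
    refine ⟨⟨h1, by linear_combination x*hy + B*z*hw, ?_⟩, h4⟩
    linear_combination y*hy + B*w*hw + B*h4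

section ZModAux

variable {p : ℕ} [hp : Fact p.Prime] {n : ℕ}

private lemma hb_lt (x : ZMod (p ^ n)) (s : ZMod p) :
    x.val + p ^ n * s.val < p ^ (n + 1) := by
  haveI : NeZero (p ^ n) := ⟨pow_ne_zero _ hp.out.ne_zero⟩
  haveI : NeZero p := ⟨hp.out.ne_zero⟩
  have h1 : x.val < p ^ n := ZMod.val_lt x
  have h2 : s.val < p := ZMod.val_lt s
  have h3 : p ^ n * (s.val + 1) ≤ p ^ n * p := Nat.mul_le_mul_left _ (Nat.succ_le_of_lt h2)
  have h4 : p ^ (n + 1) = p ^ n * p := pow_succ p n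
  have h5 : p ^ n * (s.val + 1) = p ^ n * s.val + p ^ n := by ring
  omega

private lemma lift_inj (x : ZMod (p ^ n)) :
    Function.Injective (fun t : ZMod p =>
      ((x.val + p ^ n * t.val : ℕ) : ZMod (p ^ (n + 1)))) := by
  haveI : NeZero p := ⟨hp.out.ne_zero⟩
  intro t t' h
  have h2 := congrArg ZMod.val h
  simp only [ZMod.val_cast_of_lt (hb_lt x t), ZMod.val_cast_of_lt (hb_lt x t')] at h2
  have hpn : 0 < p ^ n := pow_pos hp.out.pos n
  have h3 : t.val = t'.val := by
    have := Nat.eq_of_mul_eq_mul_left hpn (by omega : p ^ n * t.val = p ^ n * t'.val)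
    exact this
  exact ZMod.val_injective p h3

private lemma lift_mem (x : ZMod (p ^ n)) (s : ZMod p) :
    ZMod.castHom (pow_dvd_pow p (Nat.le_succ n)) (ZMod (p ^ n))
      ((x.val + p ^ n * s.val : ℕ) : ZMod (p ^ (n + 1))) = x := by
  haveI : NeZero (p ^ n) := ⟨pow_ne_zero _ hp.out.ne_zero⟩
  rw [map_natCast]
  push_cast
  have hz : ((p : ZMod (p ^ n))) ^ n = 0 := by rw [← Nat.cast_pow, ZMod.natCast_self]
  rw [hz, zero_mul, add_zero]
  exact ZMod.natCast_rightInverse x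

private lemma lift_surj (x : ZMod (p ^ n)) (y : ZMod (p ^ (n + 1)))
    (h : ZMod.castHom (pow_dvd_pow p (Nat.le_succ n)) (ZMod (p ^ n)) y = x) :
    ∃ t : ZMod p, y = ((x.val + p ^ n * t.val : ℕ) : ZMod (p ^ (n + 1))) := by
  haveI : NeZero (p ^ (n + 1)) := ⟨pow_ne_zero _ hp.out.ne_zero⟩
  haveI : NeZero p := ⟨hp.out.ne_zero⟩
  refine ⟨((y.val / p ^ n : ℕ) : ZMod p), ?_⟩
  have h1 : y.val / p ^ n < p := by
    apply Nat.div_lt_of_lt_mul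
    rw [← pow_succ]
    exact ZMod.val_lt y
  rw [ZMod.val_cast_of_lt h1]
  have h2 : (y.val : ZMod (p ^ n)) = x := by
    rw [← h]
    conv_rhs => rw [← ZMod.natCast_rightInverse y]
    rw [map_natCast]
  have h3 : x.val = y.val % p ^ n := by
    rw [← h2, ZMod.val_natCast]
  rw [h3, Nat.mod_add_div]
  exact (ZMod.natCast_rightInverse y).symm

private lemma pmul_eq_zero (w : ZMod (p ^ (n + 1))) :
    ((p : ZMod (p ^ (n + 1))) ^ n * w = 0) ↔
      ZMod.castHom (dvd_pow_self p (Nat.succ_ne_zero n)) (ZMod p) w = 0 := by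
  haveI : NeZero (p ^ (n + 1)) := ⟨pow_ne_zero _ hp.out.ne_zero⟩
  have hw : w = ((w.val : ℕ) : ZMod (p ^ (n + 1))) := (ZMod.natCast_rightInverse w).symm
  constructor
  · intro h
    rw [hw, map_natCast, ZMod.natCast_eq_zero_iff]
    rw [hw] at h
    have : ((p ^ n * w.val : ℕ) : ZMod (p ^ (n + 1))) = 0 := by push_cast; linear_combination h
    rw [ZMod.natCast_eq_zero_iff] at this
    have hd : p ^ n * p ∣ p ^ n * w.val := by rw [← pow_succ]; exact this
    exact (mul_dvd_mul_iff_left (pow_ne_zero n hp.out.ne_zero)).mp hd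
  · intro h
    rw [hw, map_natCast, ZMod.natCast_eq_zero_iff] at h
    have : ((p ^ n * w.val : ℕ) : ZMod (p ^ (n + 1))) = 0 := by
      rw [ZMod.natCast_eq_zero_iff]
      have hd : p ^ n * p ∣ p ^ n * w.val :=
        (mul_dvd_mul_iff_left (pow_ne_zero n hp.out.ne_zero)).mpr h
      exact dvd_trans (dvd_of_eq (pow_succ p n)) hd
    rw [hw]
    push_cast at this ⊢
    linear_combination this

private lemma ker_exists (y : ZMod (p ^ (n + 1)))
    (h : ZMod.castHom (pow_dvd_pow p (Nat.le_succ n)) (ZMod (p ^ n)) y = 0) :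
    ∃ w : ZMod (p ^ (n + 1)), y = (p : ZMod (p ^ (n + 1))) ^ n * w := by
  haveI : NeZero (p ^ n) := ⟨pow_ne_zero _ hp.out.ne_zero⟩
  obtain ⟨t, ht⟩ := lift_surj 0 y h
  refine ⟨((t.val : ℕ) : ZMod (p ^ (n + 1))), ?_⟩
  rw [ht]
  simp only [ZMod.val_zero, zero_add]
  push_cast
  ring

omit hp in
private lemma Psq (hn : 1 ≤ n) :
    (p : ZMod (p ^ (n + 1))) ^ n * (p : ZMod (p ^ (n + 1))) ^ n = 0 := by
  rw [← pow_add]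
  have : ((p ^ (n + n) : ℕ) : ZMod (p ^ (n + 1))) = 0 := by
    rw [ZMod.natCast_eq_zero_iff]
    exact pow_dvd_pow p (by omega)
  push_cast at this
  exact this

private lemma lin_count {F : Type*} [Field F] [Fintype F] (α β γ : F)
    (h : α ≠ 0 ∨ β ≠ 0) :
    {st : F × F | α * st.1 + β * st.2 = γ}.ncard = Fintype.card F := by
  rcases h with h | h
  · have hset : {st : F × F | α * st.1 + β * st.2 = γ} =
        Set.range (fun t : F => (α⁻¹ * (γ - β * t), t)) := by
      ext ⟨s, t⟩
      simp only [Set.mem_setOf_eq, Set.mem_range, Prod.mk.injEq]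
      constructor
      · intro he
        exact ⟨t, by field_simp; linear_combination -he, rfl⟩
      · rintro ⟨t', h1, h2⟩
        subst h2
        rw [← h1]
        field_simp
        ring
    rw [hset, ← Nat.card_coe_set_eq,
      Nat.card_range_of_injective (fun a b hab => congrArg Prod.snd hab),
      Nat.card_eq_fintype_card]
  · have hset : {st : F × F | α * st.1 + β * st.2 = γ} =
        Set.range (fun s : F => (s, β⁻¹ * (γ - α * s))) := by
      ext ⟨s, t⟩
      simp only [Set.mem_setOf_eq, Set.mem_range, Prod.mk.injEq]
      constructor
      · intro he
        exact ⟨s, rfl, by field_simp; linear_combination -he⟩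
      · rintro ⟨s', h1, h2⟩
        subst h1
        rw [← h2]
        field_simp
        ring
    rw [hset, ← Nat.card_coe_set_eq,
      Nat.card_range_of_injective (fun a b hab => congrArg Prod.fst hab),
      Nat.card_eq_fintype_card]



private lemma pair_count (hp2 : 2 < p) (hn : 1 ≤ n)
    (Ah Bh : ZMod (p ^ (n + 1))) (hA : IsUnit Ah) (x z : ZMod (p ^ n))
    (hrel : (ZMod.castHom (pow_dvd_pow p (Nat.le_succ n)) (ZMod (p ^ n)) Ah) * x ^ 2 +
        (ZMod.castHom (pow_dvd_pow p (Nat.le_succ n)) (ZMod (p ^ n)) Bh) * z ^ 2 =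
        ZMod.castHom (pow_dvd_pow p (Nat.le_succ n)) (ZMod (p ^ n)) Ah) :
    {XZ : ZMod (p ^ (n + 1)) × ZMod (p ^ (n + 1)) |
        Ah * XZ.1 ^ 2 + Bh * XZ.2 ^ 2 = Ah ∧
        ZMod.castHom (pow_dvd_pow p (Nat.le_succ n)) (ZMod (p ^ n)) XZ.1 = x ∧
        ZMod.castHom (pow_dvd_pow p (Nat.le_succ n)) (ZMod (p ^ n)) XZ.2 = z}.ncard = p := by
  haveI : NeZero p := ⟨hp.out.ne_zero⟩
  set π := ZMod.castHom (pow_dvd_pow p (Nat.le_succ n)) (ZMod (p ^ n)) with hπdef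
  set ρ := ZMod.castHom (dvd_pow_self p (Nat.succ_ne_zero n)) (ZMod p) with hρdef
  set P : ZMod (p ^ (n + 1)) := (p : ZMod (p ^ (n + 1))) ^ n with hPdef
  set xh : ZMod (p ^ (n + 1)) := ((x.val : ℕ) : ZMod (p ^ (n + 1))) with hxhdef
  set zh : ZMod (p ^ (n + 1)) := ((z.val : ℕ) : ZMod (p ^ (n + 1))) with hzhdef
  have hπx : π xh = x := by
    have := lift_mem x 0
    simpa [hxhdef] using this
  have hπz : π zh = z := by
    have := lift_mem z 0
    simpa [hzhdef] using this
  have hρs : ∀ s : ZMod p, ρ (((s.val : ℕ)) : ZMod (p ^ (n + 1))) = s := by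
    intro s
    rw [map_natCast]
    exact ZMod.natCast_rightInverse s
  have hρP : ρ P = 0 := by
    have h1 : ρ ((p : ZMod (p ^ (n + 1)))) = 0 := by rw [map_natCast, ZMod.natCast_self]
    rw [hPdef, map_pow, h1, zero_pow (by omega : n ≠ 0)]
  have hD : π (Ah * xh ^ 2 + Bh * zh ^ 2 - Ah) = 0 := by
    rw [map_sub, map_add, map_mul, map_mul, map_pow, map_pow, hπx, hπz, hrel, sub_self]
  obtain ⟨δ, hδ⟩ := ker_exists _ hD
  set α := 2 * ρ Ah * ρ xh with hαdef
  set β := 2 * ρ Bh * ρ zh with hβdef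
  set γ := -ρ δ with hγdef
  have hkey : ∀ s t : ZMod p,
      (Ah * (((x.val + p ^ n * s.val : ℕ)) : ZMod (p ^ (n + 1))) ^ 2 +
        Bh * (((z.val + p ^ n * t.val : ℕ)) : ZMod (p ^ (n + 1))) ^ 2 = Ah) ↔ (α * s + β * t = γ) := by
    intro s t
    have hX : (((x.val + p ^ n * s.val : ℕ)) : ZMod (p ^ (n + 1))) = xh + P * ((s.val : ℕ) : ZMod (p ^ (n + 1))) := by
      rw [hxhdef, hPdef]; push_cast; ring
    have hZ : (((z.val + p ^ n * t.val : ℕ)) : ZMod (p ^ (n + 1))) = zh + P * ((t.val : ℕ) : ZMod (p ^ (n + 1))) := by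
      rw [hzhdef, hPdef]; push_cast; ring
    rw [hX, hZ, ← sub_eq_zero]
    have expand : Ah * (xh + P * ((s.val : ℕ) : ZMod (p ^ (n + 1)))) ^ 2 + Bh * (zh + P * ((t.val : ℕ) : ZMod (p ^ (n + 1)))) ^ 2 - Ah
        = P * (δ + 2 * Ah * xh * ((s.val : ℕ) : ZMod (p ^ (n + 1))) + 2 * Bh * zh * ((t.val : ℕ) : ZMod (p ^ (n + 1)))) := by
      linear_combination hδ + (Ah * ((s.val : ℕ) : ZMod (p ^ (n + 1))) ^ 2 + Bh * ((t.val : ℕ) : ZMod (p ^ (n + 1))) ^ 2) * @Psq p n hn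
    rw [expand, pmul_eq_zero]
    rw [map_add, map_add, map_mul, map_mul, map_mul, map_mul, map_mul, map_mul, hρs, hρs]
    constructor
    · intro h
      rw [hαdef, hβdef, hγdef]
      have h2 : (ρ 2 : ZMod p) = 2 := by rw [map_ofNat]
      rw [h2] at h
      linear_combination h
    · intro h
      have h2 : (ρ 2 : ZMod p) = 2 := by rw [map_ofNat]
      rw [h2]
      rw [hαdef, hβdef, hγdef] at h
      linear_combination h
  set Φ := fun st : ZMod p × ZMod p =>
    (((x.val + p ^ n * st.1.val : ℕ) : ZMod (p ^ (n + 1))),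
     ((z.val + p ^ n * st.2.val : ℕ) : ZMod (p ^ (n + 1)))) with hΦdef
  have hΦinj : Function.Injective Φ := by
    intro a b h
    have h1 := congrArg Prod.fst h
    have h2 := congrArg Prod.snd h
    simp only [hΦdef] at h1 h2
    exact Prod.ext (lift_inj x h1) (lift_inj z h2)
  have hset : {XZ : ZMod (p ^ (n + 1)) × ZMod (p ^ (n + 1)) |
        Ah * XZ.1 ^ 2 + Bh * XZ.2 ^ 2 = Ah ∧ π XZ.1 = x ∧ π XZ.2 = z} =
      Φ '' {st : ZMod p × ZMod p | α * st.1 + β * st.2 = γ} := by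
    ext ⟨X, Z⟩
    simp only [Set.mem_setOf_eq, Set.mem_image, Prod.exists]
    constructor
    · rintro ⟨hq, hx, hz⟩
      obtain ⟨s, hs⟩ := lift_surj x X hx
      obtain ⟨t, ht⟩ := lift_surj z Z hz
      refine ⟨s, t, (hkey s t).mp (by rw [← hs, ← ht]; exact hq), ?_⟩
      simp only [hΦdef]
      exact Prod.ext hs.symm ht.symm
    · rintro ⟨s, t, hmem, hst⟩
      have h1 := congrArg Prod.fst hst
      have h2 := congrArg Prod.snd hst
      simp only [hΦdef] at h1 h2
      rw [← h1, ← h2]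
      exact ⟨(hkey s t).mpr hmem, lift_mem x s, lift_mem z t⟩
  rw [hset, Set.ncard_image_of_injective _ hΦinj]
  have hne : α ≠ 0 ∨ β ≠ 0 := by
    have hmod : ρ Ah * (ρ xh) ^ 2 + ρ Bh * (ρ zh) ^ 2 = ρ Ah := by
      have hc := congrArg ρ hδ
      rw [map_sub, map_add, map_mul, map_mul, map_pow, map_pow, map_mul, hρP, zero_mul] at hc
      linear_combination hc
    have hAρ : ρ Ah ≠ 0 := (hA.map ρ).ne_zero
    have h2ne : (2 : ZMod p) ≠ 0 := by
      have hnd : ¬ (p ∣ 2) := fun hd => by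
        have := Nat.le_of_dvd (by norm_num) hd; omega
      have : ((2 : ℕ) : ZMod p) ≠ 0 := by
        rw [Ne, ZMod.natCast_eq_zero_iff]; exact hnd
      simpa using this
    by_cases hx0 : ρ xh = 0
    · right
      have hBz : ρ Bh * ρ zh ≠ 0 := by
        intro hc
        apply hAρ
        rw [← hmod, hx0]
        linear_combination (ρ zh) * hc
      rw [hβdef, mul_assoc]
      exact mul_ne_zero h2ne hBz
    · left
      rw [hαdef]
      exact mul_ne_zero (mul_ne_zero h2ne hAρ) hx0
  rw [lin_count α β γ hne, ZMod.card p]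

section M2
variable {p : ℕ} [hp : Fact p.Prime] {n : ℕ}

private lemma redQ_coe (N : ℕ) (ζ : ℤ_[p]) :
    redQ p N (ζ : ℚ_[p]) = PadicInt.toZModPow N ζ := by
  have h : ‖(ζ : ℚ_[p])‖ ≤ 1 := ζ.2
  rw [redQ, dif_pos h]
  rfl

private lemma redQ_zero (N : ℕ) : redQ p N 0 = 0 := by
  have h0 : ((0 : ℤ_[p]) : ℚ_[p]) = 0 := by norm_num
  rw [← h0, redQ_coe, map_zero]

private lemma matRed_diag (N : ℕ) (a b : ℤ_[p]) :
    matRed p N 2 (Matrix.diagonal ![(a : ℚ_[p]), (b : ℚ_[p])]) =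
      Matrix.diagonal ![PadicInt.toZModPow N a, PadicInt.toZModPow N b] := by
  rw [matRed, Matrix.diagonal_map (redQ_zero N)]
  have hf : (fun m => redQ p N (![(a : ℚ_[p]), (b : ℚ_[p])] m)) =
      ![PadicInt.toZModPow N a, PadicInt.toZModPow N b] := by
    funext i
    fin_cases i <;> simp [redQ_coe]
  rw [hf]

private lemma main_count (hp2 : 2 < p) (a b : ℤ_[p]) (ha : IsUnit a) (hn : 1 ≤ n)
    (L : Matrix (Fin 2) (Fin 2) (ZMod (p ^ n)))
    (hL : L ∈ SOmod p n 2 (Matrix.diagonal ![(a : ℚ_[p]), (b : ℚ_[p])])) :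
    {M : Matrix (Fin 2) (Fin 2) (ZMod (p ^ (n + 1))) |
      M ∈ SOmod p (n + 1) 2 (Matrix.diagonal ![(a : ℚ_[p]), (b : ℚ_[p])]) ∧
      M.map (ZMod.castHom (pow_dvd_pow p (Nat.le_succ n)) (ZMod (p ^ n))) = L}.ncard = p := by
  set π := ZMod.castHom (pow_dvd_pow p (Nat.le_succ n)) (ZMod (p ^ n)) with hπdef
  set A := PadicInt.toZModPow n a with hAdef
  set B := PadicInt.toZModPow n b with hBdef
  set Ah := PadicInt.toZModPow (n + 1) a with hAhdef
  set Bh := PadicInt.toZModPow (n + 1) b with hBhdef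
  have hπA : π Ah = A :=
    RingHom.congr_fun (PadicInt.zmod_cast_comp_toZModPow n (n + 1) (Nat.le_succ n)) a
  have hπB : π Bh = B :=
    RingHom.congr_fun (PadicInt.zmod_cast_comp_toZModPow n (n + 1) (Nat.le_succ n)) b
  have hAu : IsUnit A := ha.map _
  have hAhu : IsUnit Ah := ha.map _
  rw [SOmod, Set.mem_setOf_eq, matRed_diag] at hL
  obtain ⟨hw, hy, h1⟩ := (charSO A B hAu L).mp hL
  set T := {M : Matrix (Fin 2) (Fin 2) (ZMod (p ^ (n + 1))) |
      M ∈ SOmod p (n + 1) 2 (Matrix.diagonal ![(a : ℚ_[p]), (b : ℚ_[p])]) ∧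
      M.map π = L} with hTdef
  have hmemT : ∀ M, M ∈ T ↔
      ((M 1 1 = M 0 0 ∧ Ah * M 0 1 + Bh * M 1 0 = 0 ∧
        Ah * M 0 0 ^ 2 + Bh * M 1 0 ^ 2 = Ah) ∧ M.map π = L) := by
    intro M
    rw [hTdef, Set.mem_setOf_eq, SOmod, Set.mem_setOf_eq, matRed_diag,
      charSO Ah Bh hAhu M]
  have hinj : Set.InjOn (fun M : Matrix (Fin 2) (Fin 2) (ZMod (p ^ (n + 1))) =>
      (M 0 0, M 1 0)) T := by
    intro M hM M' hM' hMM
    have e00 : M 0 0 = M' 0 0 := congrArg Prod.fst hMM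
    have e10 : M 1 0 = M' 1 0 := congrArg Prod.snd hMM
    obtain ⟨⟨hw1, hy1, -⟩, -⟩ := (hmemT M).mp hM
    obtain ⟨⟨hw2, hy2, -⟩, -⟩ := (hmemT M').mp hM'
    have e01 : M 0 1 = M' 0 1 := by
      refine hAhu.mul_left_cancel ?_
      have : Ah * M 0 1 = Ah * M' 0 1 := by
        have := hy1
        rw [e10, ← hy2] at this
        linear_combination this
      exact this
    have e11 : M 1 1 = M' 1 1 := by rw [hw1, hw2, e00]
    ext i j
    fin_cases i <;> fin_cases j <;> assumption
  have himg : {XZ : ZMod (p ^ (n + 1)) × ZMod (p ^ (n + 1)) |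
        Ah * XZ.1 ^ 2 + Bh * XZ.2 ^ 2 = Ah ∧
        π XZ.1 = L 0 0 ∧ π XZ.2 = L 1 0} =
      (fun M : Matrix (Fin 2) (Fin 2) (ZMod (p ^ (n + 1))) => (M 0 0, M 1 0)) '' T := by
    ext ⟨X, Z⟩
    simp only [Set.mem_setOf_eq, Set.mem_image]
    constructor
    · rintro ⟨hq, hx, hz⟩
      obtain ⟨yu, hyu⟩ := hAhu
      have hAhY : Ah * ((↑yu⁻¹ : ZMod (p ^ (n + 1))) * (-(Bh * Z))) = -(Bh * Z) := by
        rw [← hyu]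
        exact Units.mul_inv_cancel_left _ _
      have hπY : π ((↑yu⁻¹ : ZMod (p ^ (n + 1))) * (-(Bh * Z))) = L 0 1 := by
        refine hAu.mul_left_cancel ?_
        have h2 : A * π ((↑yu⁻¹ : ZMod (p ^ (n + 1))) * (-(Bh * Z))) = -(B * L 1 0) := by
          rw [← hπA, ← map_mul, hAhY, map_neg, map_mul, hπB, hz]
        rw [h2]
        linear_combination -hy
      refine ⟨Matrix.of ![![X, (↑yu⁻¹ : ZMod (p ^ (n + 1))) * (-(Bh * Z))], ![Z, X]],
        ?_, by simp⟩
      rw [hmemT]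
      constructor
      · refine ⟨by simp, ?_, by simpa using hq⟩
        simp only [Matrix.of_apply, Matrix.cons_val', Matrix.cons_val_zero,
          Matrix.cons_val_one, Matrix.head_cons, Matrix.head_fin_const,
          Matrix.empty_val', Matrix.cons_val_fin_one]
        linear_combination hAhY
      · have hm : (Matrix.of ![![X, (↑yu⁻¹ : ZMod (p ^ (n + 1))) * (-(Bh * Z))],
            ![Z, X]]).map π = !![L 0 0, L 0 1; L 1 0, L 0 0] := by
          ext i j
          fin_cases i <;> fin_cases j
          · exact hx
          · exact hπY
          · exact hz
          · exact hx
        rw [hm]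
        conv_rhs => rw [Matrix.eta_fin_two L]
        rw [hw]
    · rintro ⟨M, hM, hMg⟩
      obtain ⟨⟨hw1, hy1, hq1⟩, hmap⟩ := (hmemT M).mp hM
      have e0 : M 0 0 = X := congrArg Prod.fst hMg
      have e1 : M 1 0 = Z := congrArg Prod.snd hMg
      have hx : π (M 0 0) = L 0 0 := congrFun (congrFun hmap 0) 0
      have hz : π (M 1 0) = L 1 0 := congrFun (congrFun hmap 1) 0
      rw [← e0, ← e1]
      exact ⟨hq1, hx, hz⟩
  have hcount := pair_count hp2 hn Ah Bh hAhu (L 0 0) (L 1 0)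
    (by rw [hπA, hπB]; exact h1)
  rw [himg, Set.ncard_image_of_injOn hinj] at hcount
  exact hcount
end M2

theorem stmt11 (p : ℕ) [Fact p.Prime] (hp2 : 2 < p)
    (u : ℤ_[p]) (hu : ‖u‖ = 1) (husq : ¬ ∃ y : ℚ_[p], y ^ 2 = (u : ℚ_[p]))
    (v : ℤ_[p]) (hv3 : p % 4 = 3 → v = -1) (hv1 : p % 4 = 1 → v = -u) :
    ∀ a b : ℚ_[p],
      ((a, b) ∈ ({((1 : ℚ_[p]), -(v : ℚ_[p])), ((1 : ℚ_[p]), (p : ℚ_[p])),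
          ((u : ℚ_[p]), (p : ℚ_[p]))} : Set (ℚ_[p] × ℚ_[p]))) →
      ∀ n : ℕ, 1 ≤ n →
        ∀ L ∈ SOmod p n 2 (Matrix.diagonal ![a, b]),
          {M : Matrix (Fin 2) (Fin 2) (ZMod (p ^ (n + 1))) |
            M ∈ SOmod p (n + 1) 2 (Matrix.diagonal ![a, b]) ∧
            M.map (ZMod.castHom (pow_dvd_pow p (Nat.le_succ n)) (ZMod (p ^ n))) = L}.ncard
            = p := by
  intro a b hab n hn L hL
  simp only [Set.mem_insert_iff, Set.mem_singleton_iff, Prod.mk.injEq] at hab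
  rcases hab with ⟨ha1, hb1⟩ | ⟨ha1, hb1⟩ | ⟨ha1, hb1⟩
  · have ea : a = ((1 : ℤ_[p]) : ℚ_[p]) := by rw [ha1]; norm_num
    have eb : b = ((-v : ℤ_[p]) : ℚ_[p]) := by rw [hb1]; push_cast; ring
    rw [ea, eb] at hL ⊢
    exact main_count hp2 1 (-v) isUnit_one hn L hL
  · have ea : a = ((1 : ℤ_[p]) : ℚ_[p]) := by rw [ha1]; norm_num
    have eb : b = (((p : ℕ) : ℤ_[p]) : ℚ_[p]) := by rw [hb1]; push_cast; ring
    rw [ea, eb] at hL ⊢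
    exact main_count hp2 1 ((p : ℕ) : ℤ_[p]) isUnit_one hn L hL
  · have eb : b = (((p : ℕ) : ℤ_[p]) : ℚ_[p]) := by rw [hb1]; push_cast; ring
    rw [ha1, eb] at hL ⊢
    exact main_count hp2 u ((p : ℕ) : ℤ_[p]) (PadicInt.isUnit_iff.mpr hu) hn L hL
end ZModAux
end
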